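/- arXiv:2212.12265 — 6 statements merged into one kernel-verified Lean document; each statement's English description precedes it below -/
import Mathlib

section
/- Let C1 and C2 be convolutional codes in F[x]^n, let j ∈ ℕ, and let φ : C1 → C2 be a j-equivalence. Then: (1) φ is a j'-equivalence for every natural number j' with 0 ≤ j' ≤ j; and (2) wt(c_{[h,i]}) = wt(φ(c)_{[h,i]}) for all c ∈ C1 and all 0 ≤ h ≤ i ≤ j; in particular wt(c_{[i,i]}) = wt(φ(c)_{[i,i]}) for 0 ≤ i ≤ j. -/
open Polynomial

namespace ConvCode

variable {F : Type*} [Field F] [Fintype F] {n k : ℕ}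

/-- Weight of a polynomial vector: total number of nonzero coefficients. -/
noncomputable def wtv (c : Fin n → Polynomial F) : ℕ := ∑ ℓ, (c ℓ).support.card

/-- Truncation of a polynomial, keeping the coefficients of degrees `h` through `j`. -/
noncomputable def truncp (h j : ℕ) (p : Polynomial F) : Polynomial F :=
  ∑ i ∈ Finset.Icc h j, Polynomial.C (p.coeff i) * Polynomial.X ^ i

/-- Truncation `c_{[h,j]}` of a polynomial vector. -/
noncomputable def truncv (h j : ℕ) (c : Fin n → Polynomial F) : Fin n → Polynomial F :=
  fun ℓ => truncp h j (c ℓ)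

/-- Degree of a polynomial vector: the largest `i` such that `c[i] ≠ 0`. -/
def degv (c : Fin n → Polynomial F) : ℕ := Finset.univ.sup fun ℓ => (c ℓ).natDegree

/-- `φ` is a `j`-equivalence: it preserves weights of `j`-th truncations. -/
def IsJEquiv (C1 C2 : Submodule (Polynomial F) (Fin n → Polynomial F))
    (φ : C1 ≃ₗ[Polynomial F] C2) (j : ℕ) : Prop :=
  ∀ c : C1, wtv (truncv 0 j (c : Fin n → Polynomial F)) =
    wtv (truncv 0 j ((φ c : C2) : Fin n → Polynomial F))

/-- `φ` is an equivalence: it is a `j`-equivalence for every `j`. -/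
def IsEquiv (C1 C2 : Submodule (Polynomial F) (Fin n → Polynomial F))
    (φ : C1 ≃ₗ[Polynomial F] C2) : Prop := ∀ j : ℕ, IsJEquiv C1 C2 φ j

/-- `φ` is an isometry: it preserves weights. -/
def IsIsometry (C1 C2 : Submodule (Polynomial F) (Fin n → Polynomial F))
    (φ : C1 ≃ₗ[Polynomial F] C2) : Prop :=
  ∀ c : C1, wtv (c : Fin n → Polynomial F) = wtv ((φ c : C2) : Fin n → Polynomial F)

/-- `G` is a generator matrix of `C`: its rows form an `F[x]`-basis of `C`. -/
def IsGenMat (C : Submodule (Polynomial F) (Fin n → Polynomial F))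
    (G : Matrix (Fin k) (Fin n) (Polynomial F)) : Prop :=
  LinearIndependent (Polynomial F) (fun i => G i) ∧
    Submodule.span (Polynomial F) (Set.range fun i => G i) = C

/-- `G` is row reduced: its leading row coefficient matrix has full rank. -/
def RowReduced (G : Matrix (Fin k) (Fin n) (Polynomial F)) : Prop :=
  LinearIndependent F (fun i => fun ℓ => (G i ℓ).coeff (degv (G i)))

/-- `C` is noncatastrophic: it has a generator matrix with a polynomial right inverse
whose constant term has rank `k`. -/
def Noncatastrophic (C : Submodule (Polynomial F) (Fin n → Polynomial F)) (k : ℕ) : Prop :=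
  ∃ G : Matrix (Fin k) (Fin n) (Polynomial F), IsGenMat C G ∧
    (∃ H : Matrix (Fin n) (Fin k) (Polynomial F), G * H = 1) ∧
    LinearIndependent F (fun i => fun ℓ => (G i ℓ).eval 0)

/-- Joint support of a family of polynomial vectors: the pairs `(ℓ, i)` such that the
coefficient of `x^i` in the `ℓ`-th coordinate of some member is nonzero. -/
def gsupp {r : ℕ} (d : Fin r → Fin n → Polynomial F) : Set (Fin n × ℕ) :=
  { q | ∃ s, ((d s) q.1).coeff q.2 ≠ 0 }

/-- The `(r,j)`-generalized column distance of the code generated by `G`. -/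
noncomputable def gcdJ (G : Matrix (Fin k) (Fin n) (Polynomial F)) (r j : ℕ) : ℕ :=
  sInf { m | ∃ p : Fin r → Fin k → Polynomial F,
    LinearIndependent F (fun s => fun l => (p s l).eval 0) ∧
    m = (gsupp fun s => truncv 0 j (Matrix.vecMul (p s) G)).ncard }

/-- The `r`-generalized column distance: the limit as `j → ∞` of the `(r,j)`-generalized
column distances. -/
noncomputable def gcdLim (G : Matrix (Fin k) (Fin n) (Polynomial F)) (r : ℕ) : ℕ :=
  Filter.limsup (fun j => gcdJ G r j) Filter.atTop

/-- Evaluation at `0`, as an `F`-linear map `F[x]^n → F^n`. -/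
noncomputable def ev0 : (Fin n → Polynomial F) →ₗ[F] (Fin n → F) :=
  LinearMap.pi fun ℓ => (Polynomial.aeval (0 : F)).toLinearMap.comp (LinearMap.proj ℓ)

/-- `C[0] = {c(0) : c ∈ C} ⊆ F^n`. -/
noncomputable def evalZero (C : Submodule (Polynomial F) (Fin n → Polynomial F)) :
    Submodule F (Fin n → F) := (C.restrictScalars F).map ev0

/-- The `r`-th generalized Hamming weight of a block code `L ⊆ F^n`. -/
noncomputable def hammingGW (L : Submodule F (Fin n → F)) (r : ℕ) : ℕ :=
  sInf { m | ∃ V : Submodule F (Fin n → F), V ≤ L ∧ Module.finrank F V = r ∧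
    m = { ℓ : Fin n | ∃ v ∈ V, v ℓ ≠ 0 }.ncard }

/-- The `r`-th generalized weight of a convolutional code. -/
noncomputable def genWt (C : Submodule (Polynomial F) (Fin n → Polynomial F)) (r : ℕ) : ℕ :=
  sInf { m | ∃ d : Fin r → Fin n → Polynomial F, (∀ s, d s ∈ C) ∧
    (r : Cardinal) ≤ Module.rank (Polynomial F)
      ↥(Submodule.span (Polynomial F) (Set.range d)) ∧
    m = (gsupp d).ncard }

/-- The free distance of a convolutional code. -/
noncomputable def dfree (C : Submodule (Polynomial F) (Fin n → Polynomial F)) : ℕ :=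
  sInf { m | ∃ c : Fin n → Polynomial F, c ∈ C ∧ c ≠ 0 ∧ m = wtv c }

end ConvCode

open ConvCode

section Aux

variable {F : Type*} [Field F] [Fintype F] {n : ℕ}

lemma truncp_coeff (h j : ℕ) (p : Polynomial F) (m : ℕ) :
    (truncp h j p).coeff m = if m ∈ Finset.Icc h j then p.coeff m else 0 := by
  unfold truncp
  rw [Polynomial.finset_sum_coeff]
  simp only [Polynomial.coeff_C_mul, Polynomial.coeff_X_pow, mul_ite, mul_one, mul_zero]
  rw [Finset.sum_ite_eq (Finset.Icc h j) m (fun i => p.coeff i)]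

lemma truncp_support (h j : ℕ) (p : Polynomial F) :
    (truncp h j p).support = p.support ∩ Finset.Icc h j := by
  ext m
  simp only [Polynomial.mem_support_iff, truncp_coeff, Finset.mem_inter]
  by_cases hm : m ∈ Finset.Icc h j <;> simp [hm]

lemma wtv_truncv (h j : ℕ) (c : Fin n → Polynomial F) :
    wtv (truncv h j c) = ∑ ℓ, ((c ℓ).support ∩ Finset.Icc h j).card := by
  unfold wtv truncv
  simp [truncp_support]

lemma shift_card (m j' : ℕ) (p : Polynomial F) :
    ((Polynomial.X ^ m * p).support ∩ Finset.Icc 0 (j' + m)).card =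
      (p.support ∩ Finset.Icc 0 j').card := by
  have hcoeff : ∀ i, (Polynomial.X ^ m * p).coeff i =
      if m ≤ i then p.coeff (i - m) else 0 := by
    intro i
    rw [mul_comm, Polynomial.coeff_mul_X_pow']
  apply Finset.card_nbij' (fun i => i - m) (fun i => i + m)
  · intro a ha
    simp only [Finset.mem_coe, Finset.mem_inter, Polynomial.mem_support_iff, Finset.mem_Icc, hcoeff] at ha ⊢
    rcases ha with ⟨ha1, _, ha2⟩
    by_cases hma : m ≤ a
    · simp only [hma, if_true] at ha1
      exact ⟨ha1, Nat.zero_le _, by omega⟩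
    · simp [hma] at ha1
  · intro b hb
    simp only [Finset.mem_coe, Finset.mem_inter, Polynomial.mem_support_iff, Finset.mem_Icc, hcoeff] at hb ⊢
    rcases hb with ⟨hb1, _, hb2⟩
    refine ⟨by simpa using hb1, Nat.zero_le _, by omega⟩
  · intro a ha
    simp only [Finset.mem_coe, Finset.mem_inter, Polynomial.mem_support_iff, hcoeff] at ha
    rcases ha with ⟨ha1, _⟩
    by_cases hma : m ≤ a
    · dsimp only; omega
    · simp [hma] at ha1
  · intro b _; dsimp only; omega

lemma wtv_shift (m j' : ℕ) (c : Fin n → Polynomial F) :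
    wtv (truncv 0 (j' + m) ((Polynomial.X ^ m : Polynomial F) • c)) =
      wtv (truncv 0 j' c) := by
  rw [wtv_truncv, wtv_truncv]
  exact Finset.sum_congr rfl fun ℓ _ => shift_card m j' (c ℓ)

lemma split_card (h i : ℕ) (hh : 1 ≤ h) (hi : h ≤ i) (p : Polynomial F) :
    (p.support ∩ Finset.Icc 0 i).card =
      (p.support ∩ Finset.Icc 0 (h - 1)).card + (p.support ∩ Finset.Icc h i).card := by
  have hsplit : Finset.Icc 0 i = Finset.Icc 0 (h - 1) ∪ Finset.Icc h i := by
    ext m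
    simp only [Finset.mem_union, Finset.mem_Icc]
    omega
  rw [hsplit, Finset.inter_union_distrib_left, Finset.card_union_of_disjoint]
  · apply Finset.disjoint_left.mpr
    intro a ha hb
    simp only [Finset.mem_inter, Finset.mem_Icc] at ha hb
    omega

end Aux

/-- basic properties of a `j`-equivalence: it is a `j'`-equivalence for all
`j' ≤ j`, and it preserves weights of all truncations `c_{[h,i]}` with `0 ≤ h ≤ i ≤ j`. -/
theorem jEquiv_props {F : Type*} [Field F] [Fintype F] {n : ℕ}
    (C1 C2 : Submodule (Polynomial F) (Fin n → Polynomial F))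
    (j : ℕ) (φ : C1 ≃ₗ[Polynomial F] C2) (hφ : IsJEquiv C1 C2 φ j) :
    (∀ j' : ℕ, j' ≤ j → IsJEquiv C1 C2 φ j') ∧
    (∀ c : C1, ∀ h i : ℕ, h ≤ i → i ≤ j →
      wtv (truncv h i (c : Fin n → Polynomial F)) =
        wtv (truncv h i ((φ c : C2) : Fin n → Polynomial F))) := by
  have key : ∀ j' : ℕ, j' ≤ j → IsJEquiv C1 C2 φ j' := by
    intro j' hj'
    intro c
    obtain ⟨m, hm⟩ : ∃ m, j = j' + m := ⟨j - j', by omega⟩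
    have h1 := hφ (((Polynomial.X : Polynomial F) ^ m) • c)
    rw [map_smul] at h1
    have hc1 : ((((Polynomial.X : Polynomial F) ^ m) • c : C1) : Fin n → Polynomial F)
        = (Polynomial.X ^ m : Polynomial F) • (c : Fin n → Polynomial F) := rfl
    have hc2 : ((((Polynomial.X : Polynomial F) ^ m) • (φ c) : C2) : Fin n → Polynomial F)
        = (Polynomial.X ^ m : Polynomial F) • ((φ c : C2) : Fin n → Polynomial F) := rfl
    rw [hc1, hc2, hm] at h1
    rwa [wtv_shift, wtv_shift] at h1
  refine ⟨key, ?_⟩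
  intro c h i hhi hij
  by_cases hh : h = 0
  · subst hh
    exact key i hij c
  · have h1 : 1 ≤ h := Nat.one_le_iff_ne_zero.mpr hh
    have e1 := key i hij c
    have e2 := key (h - 1) (by omega) c
    rw [wtv_truncv, wtv_truncv] at e1 e2 ⊢
    have lhs : (∑ ℓ, ((((c : Fin n → Polynomial F)) ℓ).support ∩ Finset.Icc 0 i).card)
        = (∑ ℓ, ((((c : Fin n → Polynomial F)) ℓ).support ∩ Finset.Icc 0 (h-1)).card)
          + (∑ ℓ, ((((c : Fin n → Polynomial F)) ℓ).support ∩ Finset.Icc h i).card) := by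
      rw [← Finset.sum_add_distrib]
      exact Finset.sum_congr rfl fun ℓ _ => split_card h i h1 hhi _
    have rhs : (∑ ℓ, (((((φ c : C2) : Fin n → Polynomial F)) ℓ).support ∩ Finset.Icc 0 i).card)
        = (∑ ℓ, (((((φ c : C2) : Fin n → Polynomial F)) ℓ).support ∩ Finset.Icc 0 (h-1)).card)
          + (∑ ℓ, (((((φ c : C2) : Fin n → Polynomial F)) ℓ).support ∩ Finset.Icc h i).card) := by
      rw [← Finset.sum_add_distrib]
      exact Finset.sum_congr rfl fun ℓ _ => split_card h i h1 hhi _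
    omega
end

section
/- Let φ : C1 → C2 be an equivalence of convolutional codes in F[x]^n. Then there exist an n×n permutation matrix P over F and a diagonal matrix D = diag(a_1,…,a_n) with a_1,…,a_n ∈ F\{0} such that φ(c) = cPD for all c ∈ C1. In particular, every equivalence extends to an isometry of F[x]^n. -/
open Polynomial

namespace EquivShapeAux

open Finset
open scoped Classical

lemma exists_perm_of_fiber_card_eq {α β : Type*} [Fintype α] (g h : α → β)
    (H : ∀ b : β, (Finset.univ.filter fun a => g a = b).card
        = (Finset.univ.filter fun a => h a = b).card) :
    ∃ σ : Equiv.Perm α, ∀ a, g (σ a) = h a := by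
  have hcard : ∀ b : β, Fintype.card {a // h a = b} = Fintype.card {a // g a = b} := by
    intro b
    rw [Fintype.card_subtype, Fintype.card_subtype, H b]
  let mid : (Σ b : β, {a // h a = b}) ≃ (Σ b : β, {a // g a = b}) :=
    Equiv.sigmaCongrRight fun b => Fintype.equivOfCardEq (hcard b)
  let σ : Equiv.Perm α :=
    ((Equiv.sigmaFiberEquiv h).symm.trans mid).trans (Equiv.sigmaFiberEquiv g)
  refine ⟨σ, fun a => ?_⟩
  show g ((Equiv.sigmaFiberEquiv g) (mid ((Equiv.sigmaFiberEquiv h).symm a))) = h a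
  have h1 : ((Equiv.sigmaFiberEquiv h).symm a) = ⟨h a, a, rfl⟩ := rfl
  rw [h1]
  exact (mid ⟨h a, a, rfl⟩).2.2

variable {F : Type*} [Field F] [Fintype F]

lemma char_count {W : Type*} [AddCommGroup W] [Module F W] {ι : Type*} [Fintype ι]
    (E G : ι → (W →ₗ[F] F))
    (H : ∀ w : W, (univ.filter fun i => E i w ≠ 0).card
        = (univ.filter fun i => G i w ≠ 0).card) :
    ∀ μ : W →ₗ[F] F, (univ.filter (fun p : ι × F => p.2 • E p.1 = μ)).card
      = (univ.filter (fun p : ι × F => p.2 • G p.1 = μ)).card := by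
  set χ : AddChar F ℂ := AddChar.FiniteField.primitiveChar_to_Complex F with hχdef
  have hχ : χ.IsPrimitive := AddChar.FiniteField.primitiveChar_to_Complex_isPrimitive F
  have hχ1 : χ ≠ 1 := by
    intro h
    exact hχ one_ne_zero (by rw [AddChar.mulShift_one, h])
  set Ψ : (W →ₗ[F] F) → AddChar W ℂ :=
    fun lam => χ.compAddMonoidHom lam.toAddMonoidHom with hΨdef
  have Ψapp : ∀ (lam : W →ₗ[F] F) (w : W), Ψ lam w = χ (lam w) := fun _ _ => rfl
  have χne : ∀ v : F, χ v ≠ 0 := by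
    intro v hv
    have : χ v * χ (-v) = 1 := by
      rw [← AddChar.map_add_eq_mul, add_neg_cancel, AddChar.map_zero_eq_one]
    rw [hv, zero_mul] at this
    exact zero_ne_one this
  have Ψinj : Function.Injective Ψ := by
    intro lam mu h
    by_contra hne
    have hw : ∃ w, lam w ≠ mu w := by
      by_contra h'
      push_neg at h'
      exact hne (LinearMap.ext h')
    obtain ⟨w, hw⟩ := hw
    have key : ∀ v : F, χ v = 1 := by
      intro v
      set d := lam w - mu w with hd
      have hd0 : d ≠ 0 := sub_ne_zero.mpr hw
      set t := v / d with ht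
      have h1 : χ (lam (t • w)) = χ (mu (t • w)) := by
        have := congrArg (fun ψ : AddChar W ℂ => ψ (t • w)) h
        simpa [Ψapp] using this
      have h2 : lam (t • w) = mu (t • w) + t * d := by
        rw [map_smul, map_smul]
        simp only [smul_eq_mul, hd]
        ring
      rw [h2, AddChar.map_add_eq_mul] at h1
      have h3 : χ (t * d) = 1 :=
        mul_left_cancel₀ (χne (mu (t • w))) (by rw [h1, mul_one])
      have : t * d = v := by
        rw [ht]; field_simp
      rwa [this] at h3
    apply hχ1
    ext v
    rw [key v, AddChar.one_apply]
  -- linear independence of the characters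
  have li : LinearIndependent ℂ (fun lam : W →ₗ[F] F => ⇑(Ψ lam)) := by
    have h0 := (linearIndependent_monoidHom (Multiplicative W) ℂ).comp
      (fun lam : W →ₗ[F] F => AddChar.toMonoidHomEquiv (Ψ lam))
      (fun a b hab => Ψinj (AddChar.toMonoidHomEquiv.injective hab))
    exact h0
  -- the pointwise sum computation
  have hcalc : ∀ (D : ι → (W →ₗ[F] F)) (w : W), ∑ p : ι × F, (Ψ (p.2 • D p.1)) w
      = (Fintype.card F : ℂ) * ((univ.filter fun i => D i w = 0).card : ℕ) := by
    intro D w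
    rw [Fintype.sum_prod_type]
    have step : ∀ i : ι, ∑ a : F, (Ψ (a • D i)) w = if D i w = 0 then (Fintype.card F : ℂ) else 0 := by
      intro i
      have : ∀ a : F, (Ψ (a • D i)) w = χ (a * D i w) := by
        intro a; rw [Ψapp]; simp
      simp_rw [this]
      exact_mod_cast AddChar.sum_mulShift (D i w) hχ
    simp_rw [step]
    rw [← Finset.sum_filter]
    rw [Finset.sum_const]
    simp [mul_comm]
  have sumEq : (∑ p : ι × F, ⇑(Ψ (p.2 • E p.1))) = ∑ p : ι × F, ⇑(Ψ (p.2 • G p.1)) := by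
    funext w
    rw [Finset.sum_apply, Finset.sum_apply]
    have h1 := hcalc E w
    have h2 := hcalc G w
    have hE0 : (univ.filter fun i => E i w = 0).card = (univ.filter fun i => G i w = 0).card := by
      have a1 := Finset.card_filter_add_card_filter_not (s := (univ : Finset ι))
        (p := fun i => E i w = 0)
      have a2 := Finset.card_filter_add_card_filter_not (s := (univ : Finset ι))
        (p := fun i => G i w = 0)
      have hH := H w
      simp only [ne_eq, not_not] at a1 a2 hH ⊢
      omega
    rw [h1, h2, hE0]
  set T := (univ.image fun p : ι × F => p.2 • E p.1) ∪ (univ.image fun p : ι × F => p.2 • G p.1)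
    with hT
  have expand : ∀ (D : ι → (W →ₗ[F] F)),
      (univ.image fun p : ι × F => p.2 • D p.1) ⊆ T →
      (∑ p : ι × F, ⇑(Ψ (p.2 • D p.1)))
        = ∑ b ∈ T, ((univ.filter fun p : ι × F => p.2 • D p.1 = b).card : ℂ) • ⇑(Ψ b) := by
    intro D hsub
    rw [Finset.sum_comp (fun lam : W →ₗ[F] F => ⇑(Ψ lam)) (fun p : ι × F => p.2 • D p.1)]
    rw [Finset.sum_subset hsub ?_]
    · exact Finset.sum_congr rfl fun b _ => (Nat.cast_smul_eq_nsmul ℂ _ _).symm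
    · intro b _ hb
      have hc : (univ.filter fun p : ι × F => p.2 • D p.1 = b).card = 0 := by
        rw [Finset.card_eq_zero, Finset.filter_eq_empty_iff]
        intro p _
        exact fun hpb => hb (Finset.mem_image.mpr ⟨p, Finset.mem_univ p, hpb⟩)
      rw [hc]
      simp
  have main : ∑ b ∈ T, ((univ.filter fun p : ι × F => p.2 • E p.1 = b).card : ℂ) • ⇑(Ψ b)
      = ∑ b ∈ T, ((univ.filter fun p : ι × F => p.2 • G p.1 = b).card : ℂ) • ⇑(Ψ b) := by
    rw [← expand E Finset.subset_union_left, ← expand G Finset.subset_union_right]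
    exact sumEq
  have hcoef : ∀ b ∈ T, (univ.filter fun p : ι × F => p.2 • E p.1 = b).card
      = (univ.filter fun p : ι × F => p.2 • G p.1 = b).card := by
    intro b hb
    have h0 : ∑ b ∈ T, (((univ.filter fun p : ι × F => p.2 • E p.1 = b).card : ℂ)
        - ((univ.filter fun p : ι × F => p.2 • G p.1 = b).card : ℂ)) • ⇑(Ψ b) = 0 := by
      simp only [sub_smul, Finset.sum_sub_distrib, main, sub_self]
    have := linearIndependent_iff'.mp li T _ h0 b hb
    exact_mod_cast sub_eq_zero.mp this
  intro μ
  by_cases hμ : μ ∈ T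
  · exact hcoef μ hμ
  · have hz : ∀ (D : ι → (W →ₗ[F] F)),
        (univ.image fun p : ι × F => p.2 • D p.1) ⊆ T →
        (univ.filter fun p : ι × F => p.2 • D p.1 = μ).card = 0 := by
      intro D hsub
      rw [Finset.card_eq_zero, Finset.filter_eq_empty_iff]
      intro p _
      exact fun hpb => hμ (hsub (Finset.mem_image.mpr ⟨p, Finset.mem_univ p, hpb⟩))
    rw [hz E Finset.subset_union_left, hz G Finset.subset_union_right]

lemma count_zero {W : Type*} [AddCommGroup W] [Module F W] {ι : Type*} [Fintype ι]
    (E G : ι → (W →ₗ[F] F))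
    (H : ∀ w : W, (univ.filter fun i => E i w ≠ 0).card
        = (univ.filter fun i => G i w ≠ 0).card) :
    (univ.filter fun i => E i = 0).card = (univ.filter fun i => G i = 0).card := by
  have hq : 1 < Fintype.card F := Fintype.one_lt_card
  have hcc := char_count E G H 0
  have hpair : ∀ (D : ι → (W →ₗ[F] F)),
      (univ.filter (fun p : ι × F => p.2 • D p.1 = 0)).card
        = (univ.filter fun i => D i = 0).card * Fintype.card F
          + (univ.filter fun i => ¬ D i = 0).card := by
    intro D
    rw [Finset.card_filter, Fintype.sum_prod_type]
    have step : ∀ i : ι, (∑ a : F, if a • D i = (0 : W →ₗ[F] F) then 1 else 0)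
        = if D i = 0 then Fintype.card F else 1 := by
      intro i
      by_cases h : D i = 0
      · simp [h]
      · have heq : ∀ a : F, (a • D i = (0 : W →ₗ[F] F)) ↔ a = 0 := by
          intro a; rw [smul_eq_zero]; simp [h]
        simp_rw [heq, h, if_false]
        rw [Finset.sum_ite_eq' Finset.univ (0 : F) (fun _ => 1)]
        simp
    simp_rw [step]
    rw [Finset.sum_ite, Finset.sum_const, Finset.sum_const, smul_eq_mul, smul_eq_mul, mul_one]
  have h1 := hpair E
  have h2 := hpair G
  have h3 : (univ.filter fun i => E i = 0).card + (univ.filter fun i => ¬ E i = 0).card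
      = Fintype.card ι := by
    rw [Finset.card_filter_add_card_filter_not, Finset.card_univ]
  have h4 : (univ.filter fun i => G i = 0).card + (univ.filter fun i => ¬ G i = 0).card
      = Fintype.card ι := by
    rw [Finset.card_filter_add_card_filter_not, Finset.card_univ]
  set A := (univ.filter fun i => E i = 0).card
  set B := (univ.filter fun i => ¬ E i = 0).card
  set C := (univ.filter fun i => G i = 0).card
  set D := (univ.filter fun i => ¬ G i = 0).card
  set q := Fintype.card F
  have e0 : A * q + B = C * q + D := by rw [← h1, ← h2]; exact hcc
  have key : ((A : ℤ) - C) * ((q : ℤ) - 1) = 0 := by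
    have e1 : (A : ℤ) * q + B = (C : ℤ) * q + D := by exact_mod_cast e0
    have e2 : (A : ℤ) + B = (C : ℤ) + D := by exact_mod_cast h3.trans h4.symm
    ring_nf
    ring_nf at e1 e2
    linarith [e1, e2]
  rcases mul_eq_zero.mp key with h | h
  · exact_mod_cast sub_eq_zero.mp h
  · exfalso
    have hq1 : (q : ℤ) = 1 := by
      have := sub_eq_zero.mp h
      linarith
    have : q = 1 := by exact_mod_cast hq1
    omega
    
lemma proj_count {W : Type*} [AddCommGroup W] [Module F W] {ι : Type*} [Fintype ι]
    (E G : ι → (W →ₗ[F] F))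
    (H : ∀ w : W, (univ.filter fun i => E i w ≠ 0).card
        = (univ.filter fun i => G i w ≠ 0).card)
    {μ : W →ₗ[F] F} (hμ : μ ≠ 0) :
    (univ.filter fun i => ∃ a : F, a ≠ 0 ∧ μ = a • E i).card
      = (univ.filter fun i => ∃ a : F, a ≠ 0 ∧ μ = a • G i).card := by
  have hcc := char_count E G H μ
  have hbij : ∀ (D : ι → (W →ₗ[F] F)),
      (univ.filter (fun p : ι × F => p.2 • D p.1 = μ)).card
        = (univ.filter fun i => ∃ a : F, a ≠ 0 ∧ μ = a • D i).card := by
    intro D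
    apply Finset.card_bij (fun (p : ι × F) _ => p.1)
    · intro p hp
      simp only [Finset.mem_filter, Finset.mem_univ, true_and] at hp ⊢
      have hp2 : p.2 ≠ 0 := by
        rintro h0; rw [h0, zero_smul] at hp; exact hμ hp.symm
      exact ⟨p.2, hp2, hp.symm⟩
    · intro p hp q hq hpq
      simp only [Finset.mem_filter, Finset.mem_univ, true_and] at hp hq
      have hD : D p.1 ≠ 0 := by
        intro h0; rw [h0, smul_zero] at hp; exact hμ hp.symm
      have hq' : q.2 • D p.1 = μ := by rw [hpq]; exact hq
      have h2 : p.2 = q.2 := by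
        have hz : (p.2 - q.2) • D p.1 = 0 := by exact (_root_.sub_smul p.2 q.2 (D p.1)).trans (by rw [sub_eq_zero]; exact hp.trans hq'.symm)
        rcases smul_eq_zero.mp hz with h | h
        · exact sub_eq_zero.mp h
        · exact absurd h hD
      exact Prod.ext hpq h2
    · intro i hi
      simp only [Finset.mem_filter, Finset.mem_univ, true_and] at hi
      obtain ⟨a, ha, hμa⟩ := hi
      exact ⟨(i, a), by simp only [Finset.mem_filter, Finset.mem_univ, true_and]; exact hμa.symm, rfl⟩
  rw [← hbij E, ← hbij G, hcc]

lemma exists_level_perm {W : Type*} [AddCommGroup W] [Module F W] {ι : Type*} [Fintype ι]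
    (E G : ι → (W →ₗ[F] F))
    (H : ∀ w : W, (univ.filter fun i => E i w ≠ 0).card
        = (univ.filter fun i => G i w ≠ 0).card) :
    ∃ σ : Equiv.Perm ι, ∀ i, ∃ a : F, a ≠ 0 ∧ G i = a • E (σ i) := by
  letI s : Setoid (W →ₗ[F] F) :=
    ⟨fun lam mu => ∃ a : F, a ≠ 0 ∧ mu = a • lam, by
      constructor
      · exact fun lam => ⟨1, one_ne_zero, (one_smul _ _).symm⟩
      · rintro lam mu ⟨a, ha, h⟩
        exact ⟨a⁻¹, inv_ne_zero ha, by rw [h, smul_smul, inv_mul_cancel₀ ha, one_smul]⟩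
      · rintro x y z ⟨a, ha, h1⟩ ⟨b, hb, h2⟩
        exact ⟨b * a, mul_ne_zero hb ha, by rw [h2, h1, smul_smul]⟩⟩
  have hfib : ∀ b : Quotient s,
      (univ.filter fun i => (⟦E i⟧ : Quotient s) = b).card
        = (univ.filter fun i => (⟦G i⟧ : Quotient s) = b).card := by
    intro b
    induction b using Quotient.ind with
    | _ μ =>
      by_cases hμ : μ = 0
      · subst hμ
        have he : ∀ lam : W →ₗ[F] F, ((⟦lam⟧ : Quotient s) = ⟦0⟧) ↔ lam = 0 := by
          intro lam
          rw [Quotient.eq]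
          constructor
          · rintro ⟨a, ha, h0⟩
            rcases smul_eq_zero.mp h0.symm with h | h
            · exact absurd h ha
            · exact h
          · rintro rfl; exact ⟨1, one_ne_zero, (smul_zero 1).symm⟩
        rw [Finset.filter_congr (fun i _ => he (E i)),
          Finset.filter_congr (fun i _ => he (G i))]
        exact count_zero E G H
      · have he : ∀ lam : W →ₗ[F] F,
            ((⟦lam⟧ : Quotient s) = ⟦μ⟧) ↔ (∃ a : F, a ≠ 0 ∧ μ = a • lam) := by
          intro lam; rw [Quotient.eq]; exact Iff.rfl
        rw [Finset.filter_congr (fun i _ => he (E i)),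
          Finset.filter_congr (fun i _ => he (G i))]
        exact proj_count E G H hμ
  obtain ⟨σ, hσ⟩ := exists_perm_of_fiber_card_eq
    (fun i => (⟦E i⟧ : Quotient s)) (fun i => (⟦G i⟧ : Quotient s)) (fun b => by
      have h := hfib b
      convert h using 2 <;> congr!)
  exact ⟨σ, fun i => Quotient.exact (hσ i)⟩

end EquivShapeAux
open ConvCode
/-- every equivalence of convolutional codes is given by a permutation matrix
followed by an invertible diagonal matrix, i.e. `φ(c)_ℓ = a_ℓ · c_{σ(ℓ)}` for a permutation
`σ` of the coordinates and nonzero scalars `a_ℓ ∈ F`. -/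
theorem equiv_shape {F : Type*} [Field F] [Fintype F] {n : ℕ}
    (C1 C2 : Submodule (Polynomial F) (Fin n → Polynomial F))
    (φ : C1 ≃ₗ[Polynomial F] C2) (hφ : IsEquiv C1 C2 φ) :
    ∃ (σ : Equiv.Perm (Fin n)) (a : Fin n → F), (∀ ℓ, a ℓ ≠ 0) ∧
      ∀ c : C1, ∀ ℓ : Fin n,
        ((φ c : C2) : Fin n → Polynomial F) ℓ =
          Polynomial.C (a ℓ) * (c : Fin n → Polynomial F) (σ ℓ) := by
  classical
  obtain ⟨e, he⟩ : ∃ e : Fin n → ℕ → (↥C1 →ₗ[F] F),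
      ∀ ℓ i (c : ↥C1), e ℓ i c = ((c : Fin n → Polynomial F) ℓ).coeff i := by
    refine ⟨fun ℓ i =>
      { toFun := fun c => ((c : Fin n → Polynomial F) ℓ).coeff i
        map_add' := by intro c d; simp
        map_smul' := by
          intro a c
          simp [Polynomial.coeff_smul] }, fun ℓ i c => rfl⟩
  have smul_c1 : ∀ (a : F) (c : ↥C1), a • c = (Polynomial.C a : Polynomial F) • c := by
    intro a c
    apply Subtype.ext
    rw [Submodule.coe_smul_of_tower, Submodule.coe_smul]
    funext ℓ
    simp [Polynomial.smul_eq_C_mul]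
  obtain ⟨f, hf⟩ : ∃ f : Fin n → ℕ → (↥C1 →ₗ[F] F),
      ∀ ℓ i (c : ↥C1), f ℓ i c = (((φ c : C2) : Fin n → Polynomial F) ℓ).coeff i := by
    refine ⟨fun ℓ i =>
      { toFun := fun c => (((φ c : C2) : Fin n → Polynomial F) ℓ).coeff i
        map_add' := by intro c d; simp
        map_smul' := by
          intro a c
          show (((φ (a • c) : C2) : Fin n → Polynomial F) ℓ).coeff i
              = (RingHom.id F) a • (((φ c : C2) : Fin n → Polynomial F) ℓ).coeff i
          rw [smul_c1, map_smul]
          simp [Polynomial.coeff_C_mul] }, fun ℓ i c => rfl⟩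
  have shift_e : ∀ (ℓ : Fin n) (i m : ℕ) (c : ↥C1),
      e ℓ i c = e ℓ (i + m) (((Polynomial.X : Polynomial F) ^ m) • c) := by
    intro ℓ i m c
    rw [he, he, Submodule.coe_smul]
    simp [Polynomial.coeff_X_pow_mul]
  have shift_f : ∀ (ℓ : Fin n) (i m : ℕ) (c : ↥C1),
      f ℓ i c = f ℓ (i + m) (((Polynomial.X : Polynomial F) ^ m) • c) := by
    intro ℓ i m c
    rw [hf, hf, map_smul, Submodule.coe_smul]
    simp [Polynomial.coeff_X_pow_mul]
  have truncp_coeff : ∀ (j m : ℕ) (p : Polynomial F),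
      (truncp 0 j p).coeff m = if m ≤ j then p.coeff m else 0 := by
    intro j m p
    unfold ConvCode.truncp
    rw [Polynomial.finset_sum_coeff]
    simp_rw [Polynomial.coeff_C_mul_X_pow]
    rw [Finset.sum_ite_eq (Finset.Icc 0 j) m (fun i => p.coeff i)]
    simp
  have wt_eq : ∀ (j : ℕ) (d : Fin n → Polynomial F),
      wtv (truncv 0 j d)
        = ∑ i ∈ Finset.range (j+1),
            (Finset.univ.filter fun ℓ => (d ℓ).coeff i ≠ 0).card := by
    intro j d
    unfold ConvCode.wtv ConvCode.truncv
    have hsupp : ∀ p : Polynomial F,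
        (truncp 0 j p).support = (Finset.range (j+1)).filter fun i => p.coeff i ≠ 0 := by
      intro p
      ext i
      simp only [Polynomial.mem_support_iff, truncp_coeff, Finset.mem_filter, Finset.mem_range,
        Nat.lt_succ_iff]
      by_cases h : i ≤ j <;> simp [h]
    simp_rw [hsupp]
    simp_rw [Finset.card_filter]
    rw [Finset.sum_comm]
  have key : ∀ (i : ℕ) (c : ↥C1),
      (Finset.univ.filter fun ℓ => e ℓ i c ≠ 0).card
        = (Finset.univ.filter fun ℓ => f ℓ i c ≠ 0).card := by
    have hsum : ∀ (j : ℕ) (c : ↥C1),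
        (∑ i ∈ Finset.range (j+1), (Finset.univ.filter fun ℓ => e ℓ i c ≠ 0).card)
          = ∑ i ∈ Finset.range (j+1), (Finset.univ.filter fun ℓ => f ℓ i c ≠ 0).card := by
      intro j c
      have h := hφ j c
      rw [wt_eq j _, wt_eq j _] at h
      convert h using 1
      · exact Finset.sum_congr rfl fun i _ => congrArg Finset.card
          (Finset.filter_congr (fun ℓ _ => by rw [he]))
      · exact Finset.sum_congr rfl fun i _ => congrArg Finset.card
          (Finset.filter_congr (fun ℓ _ => by rw [hf]))
    intro i c
    cases i with
    | zero => simpa using hsum 0 c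
    | succ m =>
      have h1 := hsum (m+1) c
      have h2 := hsum m c
      have e1 := Finset.sum_range_succ
        (fun i => (Finset.univ.filter fun ℓ => e ℓ i c ≠ 0).card) (m+1)
      have e2 := Finset.sum_range_succ
        (fun i => (Finset.univ.filter fun ℓ => f ℓ i c ≠ 0).card) (m+1)
      omega
  have exGood : ∀ j : ℕ, ∃ σ : Equiv.Perm (Fin n),
      ∀ ℓ, ∃ a : F, a ≠ 0 ∧ ∀ i ≤ j, ∀ c : ↥C1, f ℓ i c = a * e (σ ℓ) i c := by
    intro j
    obtain ⟨σ, hσ⟩ := EquivShapeAux.exists_level_perm (fun ℓ => e ℓ j) (fun ℓ => f ℓ j)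
      (fun c => key j c)
    refine ⟨σ, fun ℓ => ?_⟩
    obtain ⟨a, ha, hfa⟩ := hσ ℓ
    refine ⟨a, ha, fun i hi c => ?_⟩
    have h1 : f ℓ i c = f ℓ j ((Polynomial.X ^ (j - i) : Polynomial F) • c) := by
      have h := shift_f ℓ i (j - i) c
      rwa [Nat.add_sub_cancel' hi] at h
    have h2 : e (σ ℓ) i c = e (σ ℓ) j ((Polynomial.X ^ (j - i) : Polynomial F) • c) := by
      have h := shift_e (σ ℓ) i (j - i) c
      rwa [Nat.add_sub_cancel' hi] at h
    rw [h1, h2, hfa]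
    simp
  have allGood : ∃ σ : Equiv.Perm (Fin n), ∀ j : ℕ,
      ∀ ℓ, ∃ a : F, a ≠ 0 ∧ ∀ i ≤ j, ∀ c : ↥C1, f ℓ i c = a * e (σ ℓ) i c := by
    by_contra hcon
    have hcon' : ∀ σ : Equiv.Perm (Fin n), ∃ j : ℕ,
        ¬ (∀ ℓ, ∃ a : F, a ≠ 0 ∧ ∀ i ≤ j, ∀ c : ↥C1, f ℓ i c = a * e (σ ℓ) i c) := by
      intro σ
      by_contra h
      exact hcon ⟨σ, fun j => by
        by_contra hj
        exact h ⟨j, hj⟩⟩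
    choose jj hjj using hcon'
    obtain ⟨σ, hσ⟩ := exGood (Finset.univ.sup jj)
    apply hjj σ
    intro ℓ
    obtain ⟨a, ha, hfa⟩ := hσ ℓ
    exact ⟨a, ha, fun i hi c =>
      hfa i (le_trans hi (Finset.le_sup (Finset.mem_univ σ))) c⟩
  obtain ⟨σ, hσ⟩ := allGood
  have final : ∀ ℓ, ∃ a : F, a ≠ 0 ∧ ∀ (i : ℕ) (c : ↥C1), f ℓ i c = a * e (σ ℓ) i c := by
    intro ℓ
    by_cases hz : ∀ (i : ℕ) (c : ↥C1), e (σ ℓ) i c = 0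
    · refine ⟨1, one_ne_zero, fun i c => ?_⟩
      obtain ⟨a, ha, hfa⟩ := hσ i ℓ
      rw [hfa i le_rfl c, hz i c, mul_zero, mul_zero]
    · push_neg at hz
      obtain ⟨i0, c0, hc0⟩ := hz
      have hval : ∀ (i : ℕ) (c : ↥C1),
          f ℓ i c = (f ℓ i0 c0 / e (σ ℓ) i0 c0) * e (σ ℓ) i c := by
        intro i c
        obtain ⟨a, ha, hfa⟩ := hσ (max i i0) ℓ
        have h0 : f ℓ i0 c0 = a * e (σ ℓ) i0 c0 := hfa i0 (le_max_right _ _) c0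
        have hdiv : f ℓ i0 c0 / e (σ ℓ) i0 c0 = a := by
          rw [h0, mul_div_assoc, div_self hc0, mul_one]
        rw [hdiv]
        exact hfa i (le_max_left _ _) c
      refine ⟨f ℓ i0 c0 / e (σ ℓ) i0 c0, ?_, hval⟩
      obtain ⟨a, ha, hfa⟩ := hσ i0 ℓ
      have h0 : f ℓ i0 c0 = a * e (σ ℓ) i0 c0 := hfa i0 le_rfl c0
      rw [h0, mul_div_assoc, div_self hc0, mul_one]
      exact ha
  choose a ha using final
  refine ⟨σ, a, fun ℓ => (ha ℓ).1, fun c ℓ => ?_⟩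
  apply Polynomial.ext
  intro i
  rw [Polynomial.coeff_C_mul]
  have h := (ha ℓ).2 i c
  rw [he, hf] at h
  exact h
end

section
/- Let φ : C1 → C2 be an F[x]-module isomorphism of convolutional codes, let c_1,…,c_k be an F[x]-basis of C1, and set t = max{deg(c_1),…,deg(c_k),deg(φ(c_1)),…,deg(φ(c_k))}. If φ is a j-equivalence for some j ≥ t, then φ is an equivalence. -/
open Polynomial

open ConvCode

section AuxJEquiv
open scoped Classical
set_option linter.unusedSectionVars false

variable {F : Type*} [Field F] [Fintype F] {n : ℕ}

/-- coefficient weight of a polynomial vector at degree `i` -/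
noncomputable def Acoef (v : Fin n → Polynomial F) (i : ℕ) : ℕ :=
  (Finset.univ.filter fun ℓ => (v ℓ).coeff i ≠ 0).card

lemma coeff_truncp (J : ℕ) (p : Polynomial F) (m : ℕ) :
    (truncp 0 J p).coeff m = if m ≤ J then p.coeff m else 0 := by
  simp only [truncp, finset_sum_coeff, coeff_C_mul, coeff_X_pow, mul_ite, mul_one, mul_zero]
  rw [Finset.sum_ite_eq]
  simp

lemma support_truncp (J : ℕ) (p : Polynomial F) :
    (truncp 0 J p).support = (Finset.range (J+1)).filter fun i => p.coeff i ≠ 0 := by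
  ext i
  simp [mem_support_iff, coeff_truncp, Nat.lt_succ_iff, ite_ne_right_iff, and_comm]

lemma wtv_truncv_eq_sum (J : ℕ) (v : Fin n → Polynomial F) :
    wtv (truncv 0 J v) = ∑ i ∈ Finset.range (J+1), Acoef v i := by
  unfold wtv truncv Acoef
  simp_rw [support_truncp, Finset.card_filter]
  exact Finset.sum_comm

lemma Acoef_Xpow_smul (m : ℕ) (v : Fin n → Polynomial F) (i : ℕ) :
    Acoef ((X : Polynomial F)^m • v) i = if m ≤ i then Acoef v (i - m) else 0 := by
  have hc : ∀ ℓ, (((X : Polynomial F)^m • v) ℓ).coeff i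
      = if m ≤ i then (v ℓ).coeff (i - m) else 0 := by
    intro ℓ
    rw [Pi.smul_apply, smul_eq_mul, X_pow_mul, coeff_mul_X_pow']
  unfold Acoef
  split_ifs with h
  · congr 1
    apply Finset.filter_congr
    intro ℓ _
    rw [hc ℓ, if_pos h]
  · convert Finset.card_empty
    rw [Finset.filter_eq_empty_iff]
    intro ℓ _
    rw [hc ℓ, if_neg h]
    simp

lemma wtv_trunc_smul {m j : ℕ} (hm : m ≤ j) (v : Fin n → Polynomial F) :
    wtv (truncv 0 j ((X : Polynomial F)^m • v)) = wtv (truncv 0 (j - m) v) := by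
  rw [wtv_truncv_eq_sum, wtv_truncv_eq_sum]
  simp_rw [Acoef_Xpow_smul]
  rw [Finset.range_eq_Ico, ← Finset.sum_Ico_consecutive _ (Nat.zero_le m) (Nat.le_succ_of_le hm)]
  have h1 : ∑ i ∈ Finset.Ico 0 m, (if m ≤ i then Acoef v (i - m) else 0) = 0 := by
    apply Finset.sum_eq_zero
    intro i hi
    rw [Finset.mem_Ico] at hi
    rw [if_neg (by omega)]
  rw [h1, zero_add, Finset.sum_Ico_eq_sum_range]
  have h2 : j + 1 - m = (j - m) + 1 := by omega
  rw [h2, Finset.range_eq_Ico]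
  apply Finset.sum_congr rfl
  intro i _
  rw [if_pos (Nat.le_add_right m i), Nat.add_sub_cancel_left]

lemma divX_iter_mul_coeff (q : Polynomial F) :
    ∀ (h : ℕ) (p : Polynomial F) (j : ℕ), q.natDegree ≤ j →
      ((Polynomial.divX)^[h] p * q).coeff j = (p * q).coeff (h + j) := by
  have step : ∀ (p : Polynomial F) (m : ℕ), q.natDegree ≤ m →
      (p.divX * q).coeff m = (p * q).coeff (m + 1) := by
    intro p m hm
    conv_rhs => rw [← divX_mul_X_add p]
    rw [add_mul, coeff_add]
    have : p.divX * X * q = p.divX * q * X := by ring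
    rw [this, coeff_mul_X, coeff_C_mul,
      coeff_eq_zero_of_natDegree_lt (Nat.lt_succ_of_le hm), mul_zero, add_zero]
  intro h
  induction h with
  | zero => intro p j _; simp
  | succ h ih =>
    intro p j hj
    rw [Function.iterate_succ_apply, ih p.divX j hj, step p (h + j) (le_trans hj (Nat.le_add_left j h))]
    congr 1
    omega

lemma sum_shift_coeff {k : ℕ} (p : Fin k → Polynomial F) (g : Fin k → Fin n → Polynomial F)
    (h j : ℕ) (hg : ∀ s ℓ, (g s ℓ).natDegree ≤ j) (ℓ : Fin n) :
    ((∑ s, (Polynomial.divX)^[h] (p s) • g s) ℓ).coeff j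
      = ((∑ s, p s • g s) ℓ).coeff (h + j) := by
  simp only [Finset.sum_apply, Pi.smul_apply, smul_eq_mul, finset_sum_coeff]
  exact Finset.sum_congr rfl fun s _ => divX_iter_mul_coeff (g s ℓ) h (p s) j (hg s ℓ)

end AuxJEquiv

/-- if `φ` is a `j`-equivalence for some `j ≥ t`, where `t` is the maximum of the
degrees of the elements of a basis of `C1` and of their images, then `φ` is an equivalence. -/
theorem jEquiv_ge_t_is_equiv {F : Type*} [Field F] [Fintype F] {n k : ℕ}
    (C1 C2 : Submodule (Polynomial F) (Fin n → Polynomial F))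
    (φ : C1 ≃ₗ[Polynomial F] C2) (b : Module.Basis (Fin k) (Polynomial F) C1) (j : ℕ)
    (ht : Finset.univ.sup (fun i => max (degv ((b i : C1) : Fin n → Polynomial F))
      (degv ((φ (b i) : C2) : Fin n → Polynomial F))) ≤ j)
    (hφ : IsJEquiv C1 C2 φ j) :
    IsEquiv C1 C2 φ := by
  classical
  -- degree bounds for basis vectors and their images
  have hdeg : ∀ s ℓ, (((b s : C1) : Fin n → Polynomial F) ℓ).natDegree ≤ j := by
    intro s ℓ
    have h1 : max (degv ((b s : C1) : Fin n → Polynomial F))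
        (degv ((φ (b s) : C2) : Fin n → Polynomial F)) ≤ j :=
      le_trans (Finset.le_sup (f := fun i => max (degv ((b i : C1) : Fin n → Polynomial F))
        (degv ((φ (b i) : C2) : Fin n → Polynomial F))) (Finset.mem_univ s)) ht
    have h2 : (((b s : C1) : Fin n → Polynomial F) ℓ).natDegree
        ≤ degv ((b s : C1) : Fin n → Polynomial F) := by
      unfold degv
      exact Finset.le_sup (f := fun ℓ => (((b s : C1) : Fin n → Polynomial F) ℓ).natDegree)
        (Finset.mem_univ ℓ)
    exact le_trans h2 (le_trans (le_max_left _ _) h1)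
  have hdeg' : ∀ s ℓ, (((φ (b s) : C2) : Fin n → Polynomial F) ℓ).natDegree ≤ j := by
    intro s ℓ
    have h1 : max (degv ((b s : C1) : Fin n → Polynomial F))
        (degv ((φ (b s) : C2) : Fin n → Polynomial F)) ≤ j :=
      le_trans (Finset.le_sup (f := fun i => max (degv ((b i : C1) : Fin n → Polynomial F))
        (degv ((φ (b i) : C2) : Fin n → Polynomial F))) (Finset.mem_univ s)) ht
    have h2 : (((φ (b s) : C2) : Fin n → Polynomial F) ℓ).natDegree
        ≤ degv ((φ (b s) : C2) : Fin n → Polynomial F) := by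
      unfold degv
      exact Finset.le_sup (f := fun ℓ => (((φ (b s) : C2) : Fin n → Polynomial F) ℓ).natDegree)
        (Finset.mem_univ ℓ)
    exact le_trans h2 (le_trans (le_max_right _ _) h1)
  -- `φ` is a `J`-equivalence for every `J ≤ j`
  have hlow : ∀ (c : C1) (J : ℕ), J ≤ j →
      wtv (truncv 0 J (c : Fin n → Polynomial F))
        = wtv (truncv 0 J ((φ c : C2) : Fin n → Polynomial F)) := by
    intro c J hJ
    have hm : j - J ≤ j := Nat.sub_le j J
    have h1 := hφ (((X : Polynomial F) ^ (j - J)) • c)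
    have hco : ((((X : Polynomial F) ^ (j - J)) • c : C1) : Fin n → Polynomial F)
        = (X : Polynomial F) ^ (j - J) • (c : Fin n → Polynomial F) := rfl
    have hco2 : ((φ ((X : Polynomial F) ^ (j - J) • c) : C2) : Fin n → Polynomial F)
        = (X : Polynomial F) ^ (j - J) • ((φ c : C2) : Fin n → Polynomial F) := by
      rw [map_smul]; rfl
    rw [hco, hco2, wtv_trunc_smul hm, wtv_trunc_smul hm] at h1
    rwa [Nat.sub_sub_self hJ] at h1
  have hAsum : ∀ (c : C1) (i : ℕ), i ≤ j →
      ∑ m ∈ Finset.range (i + 1), Acoef (c : Fin n → Polynomial F) m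
        = ∑ m ∈ Finset.range (i + 1), Acoef ((φ c : C2) : Fin n → Polynomial F) m := by
    intro c i hi
    rw [← wtv_truncv_eq_sum, ← wtv_truncv_eq_sum]
    exact hlow c i hi
  have hAlow : ∀ (c : C1) (i : ℕ), i ≤ j →
      Acoef (c : Fin n → Polynomial F) i = Acoef ((φ c : C2) : Fin n → Polynomial F) i := by
    intro c i hi
    cases i with
    | zero => simpa using hAsum c 0 (Nat.zero_le j)
    | succ i' =>
      have h1 := hAsum c (i' + 1) hi
      have h2 := hAsum c i' (le_trans (Nat.le_succ i') hi)
      have e1 := Finset.sum_range_succ (fun m => Acoef (c : Fin n → Polynomial F) m) (i' + 1)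
      have e2 := Finset.sum_range_succ
        (fun m => Acoef ((φ c : C2) : Fin n → Polynomial F) m) (i' + 1)
      simp only [e1, e2, h2] at h1
      omega
  -- high coefficients, via the shifted codeword
  have hAhigh : ∀ (c : C1) (h : ℕ),
      Acoef (c : Fin n → Polynomial F) (h + j)
        = Acoef ((φ c : C2) : Fin n → Polynomial F) (h + j) := by
    intro c h
    set f : Fin k → Polynomial F := fun s => b.repr c s with hf
    set d : C1 := ∑ s, (Polynomial.divX)^[h] (f s) • b s with hd
    have hdvec : (d : Fin n → Polynomial F)
        = ∑ s, (Polynomial.divX)^[h] (f s) • ((b s : C1) : Fin n → Polynomial F) := by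
      rw [hd]
      have := map_sum C1.subtype (fun s => (Polynomial.divX)^[h] (f s) • b s) Finset.univ
      simpa using this
    have hcvec : (c : Fin n → Polynomial F)
        = ∑ s, f s • ((b s : C1) : Fin n → Polynomial F) := by
      conv_lhs => rw [← b.sum_repr c]
      have := map_sum C1.subtype (fun s => f s • b s) Finset.univ
      simp only [Submodule.subtype_apply, Submodule.coe_smul] at this
      exact this
    have hφd : φ d = ∑ s, (Polynomial.divX)^[h] (f s) • φ (b s) := by
      rw [hd, map_sum]
      exact Finset.sum_congr rfl fun s _ => map_smul φ _ _
    have hφc : φ c = ∑ s, f s • φ (b s) := by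
      conv_lhs => rw [← b.sum_repr c]
      rw [map_sum]
      exact Finset.sum_congr rfl fun s _ => map_smul φ _ _
    have hφdvec : ((φ d : C2) : Fin n → Polynomial F)
        = ∑ s, (Polynomial.divX)^[h] (f s) • ((φ (b s) : C2) : Fin n → Polynomial F) := by
      rw [hφd]
      have := map_sum C2.subtype (fun s => (Polynomial.divX)^[h] (f s) • φ (b s)) Finset.univ
      simpa using this
    have hφcvec : ((φ c : C2) : Fin n → Polynomial F)
        = ∑ s, f s • ((φ (b s) : C2) : Fin n → Polynomial F) := by
      rw [hφc]
      have := map_sum C2.subtype (fun s => f s • φ (b s)) Finset.univ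
      simpa using this
    have key1 : ∀ ℓ, ((d : Fin n → Polynomial F) ℓ).coeff j
        = ((c : Fin n → Polynomial F) ℓ).coeff (h + j) := by
      intro ℓ
      rw [hdvec, hcvec]
      exact sum_shift_coeff f _ h j hdeg ℓ
    have key2 : ∀ ℓ, (((φ d : C2) : Fin n → Polynomial F) ℓ).coeff j
        = (((φ c : C2) : Fin n → Polynomial F) ℓ).coeff (h + j) := by
      intro ℓ
      rw [hφdvec, hφcvec]
      exact sum_shift_coeff f _ h j hdeg' ℓ
    have e1 : Acoef (c : Fin n → Polynomial F) (h + j) = Acoef (d : Fin n → Polynomial F) j := by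
      unfold Acoef
      congr 1
      apply Finset.filter_congr
      intro ℓ _
      rw [key1 ℓ]
    have e2 : Acoef ((φ d : C2) : Fin n → Polynomial F) j
        = Acoef ((φ c : C2) : Fin n → Polynomial F) (h + j) := by
      unfold Acoef
      congr 1
      apply Finset.filter_congr
      intro ℓ _
      rw [key2 ℓ]
    rw [e1, hAlow d j le_rfl, e2]
  -- conclude
  intro J c
  rw [wtv_truncv_eq_sum, wtv_truncv_eq_sum]
  apply Finset.sum_congr rfl
  intro i _
  rcases le_or_gt i j with hi | hi
  · exact hAlow c i hi
  · have hij : i = (i - j) + j := by omega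
    rw [hij]
    exact hAhigh c (i - j)
end

section
/- Let φ : C1 → C2 be a j-equivalence of convolutional codes in F[x]^n. Then there exist an n×n permutation matrix P over F and a diagonal matrix D = diag(a_1,…,a_n) with a_1,…,a_n ∈ F\{0} such that φ(c)_{[0,j]} = (c_{[0,j]})PD for all c ∈ C1. -/
open Polynomial

open ConvCode

set_option linter.unusedSectionVars false
set_option maxHeartbeats 1000000

namespace JEA
open Finset
open Finset
variable {F : Type*} [Field F] [Fintype F]

noncomputable def mychar : AddChar F ℂ := AddChar.FiniteField.primitiveChar_to_Complex F

lemma mychar_ne : (mychar (F := F)) ≠ 0 := by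
  have h := AddChar.FiniteField.primitiveChar_to_Complex_isPrimitive F
  intro h0
  have := h (a := 1) one_ne_zero
  apply this
  ext x
  have : mychar (F := F) x = 1 := by rw [h0]; simp
  simpa [AddChar.mulShift_apply, mychar] using this

lemma sum_char_linear {U : Type*} [AddCommGroup U] [Module F U] [Fintype U]
    (ρ : U →ₗ[F] F) (hρ : ρ ≠ 0) :
    ∑ u : U, mychar (ρ u) = 0 := by
  classical
  let ψ : AddChar U ℂ := (mychar (F := F)).compAddMonoidHom ρ.toAddMonoidHom
  have hs : ∑ u : U, mychar (ρ u) = ∑ u : U, ψ u := rfl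
  rw [hs, AddChar.sum_eq_ite]
  have hψ : ψ ≠ 0 := by
    intro h
    obtain ⟨u0, hu0⟩ : ∃ u, ρ u ≠ 0 := by
      by_contra hall; push_neg at hall; exact hρ (LinearMap.ext fun u => hall u)
    obtain ⟨a, ha⟩ := AddChar.ne_one_iff.1 (by exact_mod_cast mychar_ne (F := F) : mychar (F := F) ≠ 1)
    have h2 : ψ ((a * (ρ u0)⁻¹) • u0) = 1 := by rw [h]; simp
    rw [show ψ ((a * (ρ u0)⁻¹) • u0) = mychar (ρ ((a * (ρ u0)⁻¹) • u0)) from rfl] at h2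
    rw [map_smul, smul_eq_mul, mul_assoc, inv_mul_cancel₀ hu0, mul_one] at h2
    exact ha h2
  simp [hψ]

lemma sum_char_zero {U : Type*} [AddCommGroup U] [Module F U] [Fintype U] :
    ∑ u : U, mychar ((0 : U →ₗ[F] F) u) = (Fintype.card U : ℂ) := by
  simp [card_univ]

lemma sum_char_mul (c : F) (hc : c ≠ 0) : ∑ t : F, mychar (t * c) = 0 := by
  have : (LinearMap.smulRight (LinearMap.id : F →ₗ[F] F) c) ≠ 0 := by
    intro h
    have := LinearMap.congr_fun h 1
    simpa [hc] using this
  simpa using sum_char_linear (LinearMap.smulRight (LinearMap.id : F →ₗ[F] F) c) this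

open Classical in
lemma core_count {U W : Type*} [AddCommGroup U] [Module F U] [Fintype U] [Fintype W]
    (κ κ' : W → U →ₗ[F] F)
    (h : ∀ u : U, (univ.filter fun w => κ w u ≠ 0).card
        = (univ.filter fun w => κ' w u ≠ 0).card)
    (ν : U →ₗ[F] F) (hν : ν ≠ 0) :
    (univ.filter fun w => ∃ t : F, t • κ w = ν).card
      = (univ.filter fun w => ∃ t : F, t • κ' w = ν).card := by
  classical
  -- from single-counts to pair-counts
  have pairs : ∀ κ₀ : W → U →ₗ[F] F,
      ((univ.filter fun p : W × F => p.2 • κ₀ p.1 = ν).card : ℂ)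
        = (univ.filter fun w => ∃ t : F, t • κ₀ w = ν).card := by
    intro κ₀
    congr 1
    apply Finset.card_bij (fun p _ => p.1)
    · intro p hp
      simp only [mem_filter, mem_univ, true_and] at hp ⊢
      exact ⟨p.2, hp⟩
    · intro p hp q hq hpq
      simp only [mem_filter, mem_univ, true_and] at hp hq
      obtain ⟨u0, hu0⟩ : ∃ u, κ₀ p.1 u ≠ 0 := by
        by_contra hall; push_neg at hall
        exact hν (by rw [← hp]; ext u; simp [hall u])
      rw [← hpq] at hq
      have : p.2 * κ₀ p.1 u0 = q.2 * κ₀ p.1 u0 := by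
        have h1 := LinearMap.congr_fun hp u0
        have h2 := LinearMap.congr_fun hq u0
        simp only [LinearMap.smul_apply, smul_eq_mul] at h1 h2
        rw [h1, h2]
      have : p.2 = q.2 := mul_right_cancel₀ hu0 this
      exact Prod.ext hpq this
    · intro w hw
      simp only [mem_filter, mem_univ, true_and] at hw
      obtain ⟨t, ht⟩ := hw
      exact ⟨(w, t), by simp [ht], rfl⟩
  -- the big character sum for a family
  have bigsum : ∀ κ₀ : W → U →ₗ[F] F,
      ∑ u : U, ((∑ w : W, ∑ t : F, mychar (t * κ₀ w u)) * mychar (- ν u))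
        = ((univ.filter fun p : W × F => p.2 • κ₀ p.1 = ν).card : ℂ) * (Fintype.card U : ℂ) := by
    intro κ₀
    have lhs_eq : ∀ u : U, (∑ w : W, ∑ t : F, mychar (t * κ₀ w u)) * mychar (- ν u)
        = ∑ p : W × F, mychar ((p.2 • κ₀ p.1 - ν) u) := by
      intro u
      rw [Fintype.sum_prod_type]
      rw [Finset.sum_mul]
      congr 1; ext w
      rw [Finset.sum_mul]
      congr 1; ext t
      rw [← AddChar.map_add_eq_mul]
      congr 1
      simp [sub_eq_add_neg]
    calc ∑ u : U, (∑ w : W, ∑ t : F, mychar (t * κ₀ w u)) * mychar (- ν u)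
        = ∑ u : U, ∑ p : W × F, mychar ((p.2 • κ₀ p.1 - ν) u) := by
          exact Finset.sum_congr rfl fun u _ => lhs_eq u
      _ = ∑ p : W × F, ∑ u : U, mychar ((p.2 • κ₀ p.1 - ν) u) := Finset.sum_comm
      _ = ∑ p : W × F, (if p.2 • κ₀ p.1 = ν then (Fintype.card U : ℂ) else 0) := by
          apply Finset.sum_congr rfl
          intro p _
          by_cases hp : p.2 • κ₀ p.1 = ν
          · rw [if_pos hp]
            have : p.2 • κ₀ p.1 - ν = 0 := by rw [hp]; simp
            rw [this]
            simpa using sum_char_zero (F := F) (U := U)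
          · rw [if_neg hp]
            exact sum_char_linear _ (sub_ne_zero.mpr hp)
      _ = ((univ.filter fun p : W × F => p.2 • κ₀ p.1 = ν).card : ℂ) * (Fintype.card U : ℂ) := by
          rw [← Finset.sum_filter, Finset.sum_const, nsmul_eq_mul]
  -- inner sums agree pointwise thanks to the weight hypothesis
  have inner_eq : ∀ u : U, (∑ w : W, ∑ t : F, mychar (t * κ w u))
      = ∑ w : W, ∑ t : F, mychar (t * κ' w u) := by
    intro u
    have aux : ∀ κ₀ : W → U →ₗ[F] F, (∑ w : W, ∑ t : F, mychar (t * κ₀ w u))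
        = (Fintype.card F : ℂ) * ((univ.filter fun w => ¬ (κ₀ w u ≠ 0)).card) := by
      intro κ₀
      have : ∀ w : W, (∑ t : F, mychar (t * κ₀ w u))
          = if κ₀ w u ≠ 0 then 0 else (Fintype.card F : ℂ) := by
        intro w
        by_cases hw : κ₀ w u = 0
        · simp [hw, card_univ]
        · simp [hw, sum_char_mul _ hw]
      rw [Finset.sum_congr rfl fun w _ => this w]
      rw [Finset.sum_ite, Finset.sum_const, Finset.sum_const]
      simp [mul_comm]
    rw [aux κ, aux κ']
    congr 2
    have h1 : (univ.filter fun w => ¬ (κ w u ≠ 0)).card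
        = Fintype.card W - (univ.filter fun w => κ w u ≠ 0).card := by
      rw [Finset.filter_not, Finset.card_sdiff_of_subset (Finset.filter_subset _ _), Finset.card_univ]
    have h2 : (univ.filter fun w => ¬ (κ' w u ≠ 0)).card
        = Fintype.card W - (univ.filter fun w => κ' w u ≠ 0).card := by
      rw [Finset.filter_not, Finset.card_sdiff_of_subset (Finset.filter_subset _ _), Finset.card_univ]
    rw [h1, h2, h u]
  -- conclude
  have key : ((univ.filter fun p : W × F => p.2 • κ p.1 = ν).card : ℂ) * (Fintype.card U : ℂ)
      = ((univ.filter fun p : W × F => p.2 • κ' p.1 = ν).card : ℂ) * (Fintype.card U : ℂ) := by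
    rw [← bigsum κ, ← bigsum κ']
    exact Finset.sum_congr rfl fun u _ => by rw [inner_eq u]
  have hU : (Fintype.card U : ℂ) ≠ 0 := by
    exact_mod_cast Fintype.card_ne_zero
  have := mul_right_cancel₀ hU key
  rw [pairs κ, pairs κ'] at this
  exact_mod_cast this

open Classical in
lemma core_countM_aux {M W : Type*} [AddCommGroup M] [Module F M] [Fintype W]
    (lam lam' : W → M →ₗ[F] F)
    (h : ∀ m : M, (univ.filter fun w => lam w m ≠ 0).card
        = (univ.filter fun w => lam' w m ≠ 0).card)
    (ν : M →ₗ[F] F) (hν : ν ≠ 0) (hex : ∃ w, ∃ t : F, t • lam w = ν) :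
    (univ.filter fun w => ∃ t : F, t • lam w = ν).card
      = (univ.filter fun w => ∃ t : F, t • lam' w = ν).card := by
  classical
  set Θ : M →ₗ[F] ((W → F) × (W → F)) :=
    LinearMap.prod (LinearMap.pi fun w => lam w) (LinearMap.pi fun w => lam' w) with hΘ
  set U : Submodule F ((W → F) × (W → F)) := LinearMap.range Θ with hU
  haveI : Finite ((W → F) × (W → F)) := by infer_instance
  haveI : Fintype U := Fintype.ofFinite U
  set Θ' : M →ₗ[F] U := Θ.rangeRestrict with hΘ'
  have hsurj : Function.Surjective Θ' := LinearMap.surjective_rangeRestrict Θ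
  set κ : W → (U →ₗ[F] F) := fun w =>
    (LinearMap.proj w).comp ((LinearMap.fst F (W → F) (W → F)).comp U.subtype) with hκ
  set κ' : W → (U →ₗ[F] F) := fun w =>
    (LinearMap.proj w).comp ((LinearMap.snd F (W → F) (W → F)).comp U.subtype) with hκ'
  have hcomp : ∀ w, (κ w).comp Θ' = lam w := fun w => rfl
  have hcomp' : ∀ w, (κ' w).comp Θ' = lam' w := fun w => rfl
  have happ : ∀ w m, κ w (Θ' m) = lam w m := fun w m => rfl
  have happ' : ∀ w m, κ' w (Θ' m) = lam' w m := fun w m => rfl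
  -- the lifted functional
  obtain ⟨w0, t0, h0⟩ := hex
  set νU : U →ₗ[F] F := t0 • κ w0 with hνU
  have hνUcomp : νU.comp Θ' = ν := by
    rw [hνU, ← h0]
    ext m
    simp [happ]
  have hνU0 : νU ≠ 0 := by
    intro h0'
    apply hν
    rw [← hνUcomp, h0']
    ext m; simp
  -- condition transfer
  have trans1 : ∀ (μ : W → M →ₗ[F] F) (μU : W → U →ₗ[F] F),
      (∀ w, (μU w).comp Θ' = μ w) →
      ∀ w, (∃ t : F, t • μU w = νU) ↔ (∃ t : F, t • μ w = ν) := by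
    intro μ μU hc w
    constructor
    · rintro ⟨t, ht⟩
      refine ⟨t, ?_⟩
      rw [← hc w, ← hνUcomp, ← ht]
      ext m; simp
    · rintro ⟨t, ht⟩
      refine ⟨t, ?_⟩
      ext u
      obtain ⟨m, rfl⟩ := hsurj u
      have h1 := LinearMap.congr_fun ht m
      rw [← hc w] at h1
      have h2 := LinearMap.congr_fun hνUcomp m
      simp only [LinearMap.comp_apply, LinearMap.smul_apply] at h1 h2 ⊢
      rw [h1, h2]
  have hcount : ∀ u : U, (univ.filter fun w => κ w u ≠ 0).card
      = (univ.filter fun w => κ' w u ≠ 0).card := by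
    intro u
    obtain ⟨m, rfl⟩ := hsurj u
    have e1 : (univ.filter fun w => κ w (Θ' m) ≠ 0) = (univ.filter fun w => lam w m ≠ 0) := by
      apply Finset.filter_congr; intro w _; rw [happ]
    have e2 : (univ.filter fun w => κ' w (Θ' m) ≠ 0) = (univ.filter fun w => lam' w m ≠ 0) := by
      apply Finset.filter_congr; intro w _; rw [happ']
    rw [e1, e2]
    exact h m
  have e1 : (univ.filter fun w => ∃ t : F, t • lam w = ν)
      = (univ.filter fun w => ∃ t : F, t • κ w = νU) := by
    apply Finset.filter_congr
    intro w _
    exact (trans1 lam κ hcomp w).symm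
  have e2 : (univ.filter fun w => ∃ t : F, t • lam' w = ν)
      = (univ.filter fun w => ∃ t : F, t • κ' w = νU) := by
    apply Finset.filter_congr
    intro w _
    exact (trans1 lam' κ' hcomp' w).symm
  rw [e1, e2]
  exact core_count κ κ' hcount νU hνU0

open Classical in
lemma core_countM {M W : Type*} [AddCommGroup M] [Module F M] [Fintype W]
    (lam lam' : W → M →ₗ[F] F)
    (h : ∀ m : M, (univ.filter fun w => lam w m ≠ 0).card
        = (univ.filter fun w => lam' w m ≠ 0).card)
    (ν : M →ₗ[F] F) (hν : ν ≠ 0) :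
    (univ.filter fun w => ∃ t : F, t • lam w = ν).card
      = (univ.filter fun w => ∃ t : F, t • lam' w = ν).card := by
  by_cases h1 : ∃ w, ∃ t : F, t • lam w = ν
  · exact core_countM_aux lam lam' h ν hν h1
  · by_cases h2 : ∃ w, ∃ t : F, t • lam' w = ν
    · exact (core_countM_aux lam' lam (fun m => (h m).symm) ν hν h2).symm
    · push_neg at h1 h2
      rw [Finset.filter_false_of_mem (fun w _ => by push_neg; exact h1 w),
          Finset.filter_false_of_mem (fun w _ => by push_neg; exact h2 w)]

open Classical in
lemma exists_perm_of_fiber_counts {n : ℕ} {Q : Type*} (f f' : Fin n → Q)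
    (h : ∀ q : Q, (univ.filter fun x => f x = q).card
        = (univ.filter fun x => f' x = q).card) :
    ∃ σ : Equiv.Perm (Fin n), ∀ x, f (σ x) = f' x := by
  classical
  let e : ∀ q : Q, {x // f' x = q} ≃ {x // f x = q} := fun q =>
    Fintype.equivOfCardEq (by rw [Fintype.card_subtype, Fintype.card_subtype, h q])
  let σ : Equiv.Perm (Fin n) :=
    ((Equiv.sigmaFiberEquiv f').symm.trans (Equiv.sigmaCongrRight e)).trans
      (Equiv.sigmaFiberEquiv f)
  refine ⟨σ, fun x => ?_⟩
  exact ((e (f' x)) ⟨x, rfl⟩).2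

open Classical in
lemma exists_perm_ray {M : Type*} [AddCommGroup M] [Module F M] {n : ℕ}
    (θ θ' : Fin n → (M →ₗ[F] F))
    (hray : ∀ ν : M →ₗ[F] F, ν ≠ 0 →
      (univ.filter fun m => ∃ t : F, t • θ m = ν).card
        = (univ.filter fun m => ∃ t : F, t • θ' m = ν).card) :
    ∃ σ : Equiv.Perm (Fin n), ∀ ℓ, ∃ t : Fˣ, t • θ (σ ℓ) = θ' ℓ := by
  classical
  set g : Fin n → Set (M →ₗ[F] F) := fun m => MulAction.orbit Fˣ (θ m) with hg
  set g' : Fin n → Set (M →ₗ[F] F) := fun m => MulAction.orbit Fˣ (θ' m) with hg'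
  -- orbit of 0 is {0}
  have orbit_zero : ∀ b : M →ₗ[F] F, MulAction.orbit Fˣ b = MulAction.orbit Fˣ 0 ↔ b = 0 := by
    intro b
    constructor
    · intro hb
      have : b ∈ MulAction.orbit Fˣ (0 : M →ₗ[F] F) := by
        rw [← hb]; exact MulAction.mem_orbit_self b
      obtain ⟨t, ht⟩ := this
      rw [← ht]; simp
    · rintro rfl; rfl
  -- membership with units vs scalars
  have unit_iff : ∀ a b : M →ₗ[F] F, b ≠ 0 →
      ((∃ t : Fˣ, t • a = b) ↔ (∃ t : F, t • a = b)) := by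
    intro a b hb
    constructor
    · rintro ⟨t, ht⟩; exact ⟨(t : F), ht⟩
    · rintro ⟨t, ht⟩
      have ht0 : t ≠ 0 := by rintro rfl; rw [zero_smul] at ht; exact hb ht.symm
      exact ⟨Units.mk0 t ht0, ht⟩
  have orbit_eq_iff : ∀ a b : M →ₗ[F] F,
      (MulAction.orbit Fˣ a = MulAction.orbit Fˣ b ↔ ∃ t : Fˣ, t • a = b) := by
    intro a b
    constructor
    · intro hab
      have : b ∈ MulAction.orbit Fˣ a := by rw [hab]; exact MulAction.mem_orbit_self b
      obtain ⟨t, ht⟩ := this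
      exact ⟨t, ht⟩
    · rintro ⟨t, rfl⟩
      exact (MulAction.orbit_smul t a).symm
  -- first: counts of nonvanishing coordinates agree
  have cardA : (univ.filter fun m => θ m ≠ 0).card = (univ.filter fun m => θ' m ≠ 0).card := by
    set T : Finset (Set (M →ₗ[F] F)) :=
      ((univ.filter fun m => θ m ≠ 0).image g) ∪ ((univ.filter fun m => θ' m ≠ 0).image g') with hT
    rw [Finset.card_eq_sum_card_fiberwise (f := g) (t := T)
      (fun m hm => Finset.mem_union_left _ (Finset.mem_image_of_mem g hm))]
    rw [Finset.card_eq_sum_card_fiberwise (f := g') (t := T)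
      (fun m hm => Finset.mem_union_right _ (Finset.mem_image_of_mem g' hm))]
    apply Finset.sum_congr rfl
    intro q hq
    -- q is the orbit of some nonzero functional b
    obtain ⟨b, hb0, hbq⟩ : ∃ b : M →ₗ[F] F, b ≠ 0 ∧ MulAction.orbit Fˣ b = q := by
      rw [hT, Finset.mem_union] at hq
      rcases hq with hq | hq <;> obtain ⟨m, hm, hmq⟩ := Finset.mem_image.1 hq <;>
        rw [Finset.mem_filter] at hm
      · exact ⟨θ m, hm.2, hmq⟩
      · exact ⟨θ' m, hm.2, hmq⟩
    have efib : ∀ θ₀ : Fin n → (M →ₗ[F] F),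
        ((univ.filter fun m => θ₀ m ≠ 0).filter fun m => MulAction.orbit Fˣ (θ₀ m) = q)
          = univ.filter fun m => ∃ t : F, t • θ₀ m = b := by
      intro θ₀
      ext m
      simp only [Finset.mem_filter, Finset.mem_univ, true_and]
      constructor
      · rintro ⟨hm0, hmq⟩
        rw [← hbq, orbit_eq_iff] at hmq
        exact (unit_iff _ _ hb0).1 hmq
      · intro hm
        have hu := (unit_iff _ _ hb0).2 hm
        obtain ⟨t, ht⟩ := hu
        constructor
        · intro h0; rw [h0, smul_zero] at ht; exact hb0 ht.symm
        · rw [← hbq, orbit_eq_iff]; exact ⟨t, ht⟩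
    rw [efib θ, efib θ', hray b hb0]
  -- now: fiberwise counts agree for every q
  have hfib : ∀ q : Set (M →ₗ[F] F),
      (univ.filter fun m => g m = q).card = (univ.filter fun m => g' m = q).card := by
    intro q
    by_cases hq0 : q = MulAction.orbit Fˣ (0 : M →ₗ[F] F)
    · subst hq0
      have e0 : ∀ θ₀ : Fin n → (M →ₗ[F] F),
          (univ.filter fun m => MulAction.orbit Fˣ (θ₀ m) = MulAction.orbit Fˣ (0 : M →ₗ[F] F)).card
            = n - (univ.filter fun m => θ₀ m ≠ 0).card := by
        intro θ₀
        have : (univ.filter fun m => MulAction.orbit Fˣ (θ₀ m) = MulAction.orbit Fˣ (0 : M →ₗ[F] F))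
            = univ.filter fun m => ¬ (θ₀ m ≠ 0) := by
          apply Finset.filter_congr
          intro m _
          rw [orbit_zero (θ₀ m)]
          simp
        rw [this, Finset.filter_not, Finset.card_sdiff_of_subset (Finset.filter_subset _ _)]
        simp
      rw [hg, hg', e0 θ, e0 θ', cardA]
    · by_cases hqb : ∃ b : M →ₗ[F] F, b ≠ 0 ∧ MulAction.orbit Fˣ b = q
      · obtain ⟨b, hb0, hbq⟩ := hqb
        have efib : ∀ θ₀ : Fin n → (M →ₗ[F] F),
            (univ.filter fun m => MulAction.orbit Fˣ (θ₀ m) = q)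
              = univ.filter fun m => ∃ t : F, t • θ₀ m = b := by
          intro θ₀
          apply Finset.filter_congr
          intro m _
          rw [← hbq, orbit_eq_iff]
          constructor
          · intro hm; exact (unit_iff _ _ hb0).1 hm
          · intro hm; exact (unit_iff _ _ hb0).2 hm
        rw [hg, hg', efib θ, efib θ', hray b hb0]
      · push_neg at hqb
        have efib : ∀ θ₀ : Fin n → (M →ₗ[F] F),
            (univ.filter fun m => MulAction.orbit Fˣ (θ₀ m) = q) = ∅ := by
          intro θ₀
          apply Finset.filter_false_of_mem
          intro m _
          intro hc
          by_cases hm0 : θ₀ m = 0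
          · rw [hm0] at hc; exact hq0 hc.symm
          · exact hqb (θ₀ m) hm0 hc
        rw [hg, hg', efib θ, efib θ']
  obtain ⟨σ, hσ⟩ := exists_perm_of_fiber_counts g g' hfib
  refine ⟨σ, fun ℓ => ?_⟩
  have := hσ ℓ
  rw [hg, hg'] at this
  rw [orbit_eq_iff] at this
  exact this
open Polynomial Finset
variable {F : Type*} [Field F] [Fintype F] {n : ℕ}
  (C1 C2 : Submodule (Polynomial F) (Fin n → Polynomial F))
  (φ : C1 ≃ₗ[Polynomial F] C2)

noncomputable example : Module F C1 := by infer_instance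

noncomputable def lam (ℓ : Fin n) (i : ℕ) : C1 →ₗ[F] F where
  toFun c := ((c : Fin n → Polynomial F) ℓ).coeff i
  map_add' c d := by simp
  map_smul' t c := by simp [Polynomial.coeff_smul]

noncomputable def xi : C1 →ₗ[F] C1 where
  toFun c := ⟨(X : Polynomial F) • (c : Fin n → Polynomial F), C1.smul_mem _ c.2⟩
  map_add' c d := by ext ℓ; simp [mul_add]
  map_smul' t c := by
    apply Subtype.ext
    show (X : Polynomial F) • ((t • c : C1) : Fin n → Polynomial F)
        = t • ((X : Polynomial F) • (c : Fin n → Polynomial F))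
    rw [Submodule.coe_smul_of_tower]
    exact smul_comm _ _ _

noncomputable def phiF : C1 →ₗ[F] C2 :=
  LinearMap.restrictScalars F (φ : C1 →ₗ[Polynomial F] C2)

noncomputable def lam' (ℓ : Fin n) (i : ℕ) : C1 →ₗ[F] F :=
  (lam C2 ℓ i).comp (phiF C1 C2 φ)

lemma lam_apply (ℓ : Fin n) (i : ℕ) (c : C1) :
    lam C1 ℓ i c = ((c : Fin n → Polynomial F) ℓ).coeff i := rfl

lemma lam'_apply (ℓ : Fin n) (i : ℕ) (c : C1) :
    lam' C1 C2 φ ℓ i c = (((φ c : C2) : Fin n → Polynomial F) ℓ).coeff i := rfl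


lemma xi_coe (c : C1) :
    ((xi C1 c : C1) : Fin n → Polynomial F) = (X : Polynomial F) • (c : Fin n → Polynomial F) :=
  rfl

lemma phi_xi (c : C1) : φ (xi C1 c) = (X : Polynomial F) • φ c := by
  have : xi C1 c = (X : Polynomial F) • c := rfl
  rw [this, map_smul]

lemma coeff_X_smul (p : Polynomial F) (i : ℕ) :
    ((X : Polynomial F) • p).coeff (i + 1) = p.coeff i := by
  rw [smul_eq_mul, Polynomial.coeff_X_mul]

lemma coeff_X_smul_zero (p : Polynomial F) :
    ((X : Polynomial F) • p).coeff 0 = 0 := by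
  rw [smul_eq_mul, Polynomial.mul_coeff_zero]
  simp

lemma lam_comp_xi (ℓ : Fin n) (i : ℕ) :
    (lam C1 ℓ (i+1)).comp (xi C1) = lam C1 ℓ i := by
  ext c
  rw [LinearMap.comp_apply, lam_apply, lam_apply, xi_coe, Pi.smul_apply, coeff_X_smul]

lemma lam_comp_xi_zero (ℓ : Fin n) :
    (lam C1 ℓ 0).comp (xi C1) = 0 := by
  ext c
  rw [LinearMap.comp_apply, LinearMap.zero_apply, lam_apply, xi_coe, Pi.smul_apply,
    coeff_X_smul_zero]

lemma lam'_comp_xi (ℓ : Fin n) (i : ℕ) :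
    (lam' C1 C2 φ ℓ (i+1)).comp (xi C1) = lam' C1 C2 φ ℓ i := by
  ext c
  rw [LinearMap.comp_apply, lam'_apply, lam'_apply, phi_xi, Submodule.coe_smul_of_tower,
    Pi.smul_apply, coeff_X_smul]

lemma lam'_comp_xi_zero (ℓ : Fin n) :
    (lam' C1 C2 φ ℓ 0).comp (xi C1) = 0 := by
  ext c
  rw [LinearMap.comp_apply, LinearMap.zero_apply, lam'_apply, phi_xi,
    Submodule.coe_smul_of_tower, Pi.smul_apply, coeff_X_smul_zero]

lemma lam_xi_pow (ℓ : Fin n) (k i : ℕ) (c : C1) :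
    lam C1 ℓ i (((xi C1) ^ k) c) = if k ≤ i then lam C1 ℓ (i - k) c else 0 := by
  induction k generalizing c with
  | zero => simp
  | succ k ih =>
    have hp : ((xi C1) ^ (k+1)) c = ((xi C1) ^ k) (xi C1 c) := by
      rw [pow_succ]; rfl
    rw [hp, ih (xi C1 c)]
    by_cases hk : k + 1 ≤ i
    · have hk' : k ≤ i := Nat.le_of_succ_le hk
      rw [if_pos hk', if_pos hk]
      have : i - k = (i - (k+1)) + 1 := by omega
      rw [this]
      exact LinearMap.congr_fun (lam_comp_xi C1 ℓ (i - (k+1))) c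
    · by_cases hk' : k ≤ i
      · have : i - k = 0 := by omega
        rw [if_pos hk', if_neg hk, this]
        exact LinearMap.congr_fun (lam_comp_xi_zero C1 ℓ) c
      · rw [if_neg hk', if_neg hk]

lemma lam'_xi_pow (ℓ : Fin n) (k i : ℕ) (c : C1) :
    lam' C1 C2 φ ℓ i (((xi C1) ^ k) c) = if k ≤ i then lam' C1 C2 φ ℓ (i - k) c else 0 := by
  induction k generalizing c with
  | zero => simp
  | succ k ih =>
    have hp : ((xi C1) ^ (k+1)) c = ((xi C1) ^ k) (xi C1 c) := by
      rw [pow_succ]; rfl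
    rw [hp, ih (xi C1 c)]
    by_cases hk : k + 1 ≤ i
    · have hk' : k ≤ i := Nat.le_of_succ_le hk
      rw [if_pos hk', if_pos hk]
      have : i - k = (i - (k+1)) + 1 := by omega
      rw [this]
      exact LinearMap.congr_fun (lam'_comp_xi C1 C2 φ ℓ (i - (k+1))) c
    · by_cases hk' : k ≤ i
      · have : i - k = 0 := by omega
        rw [if_pos hk', if_neg hk, this]
        exact LinearMap.congr_fun (lam'_comp_xi_zero C1 C2 φ ℓ) c
      · rw [if_neg hk', if_neg hk]

lemma lam_comp_xi_pow (ℓ : Fin n) (k i : ℕ) :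
    (lam C1 ℓ (i + k)).comp ((xi C1) ^ k) = lam C1 ℓ i := by
  ext c
  rw [LinearMap.comp_apply, lam_xi_pow]
  simp

lemma lam'_comp_xi_pow (ℓ : Fin n) (k i : ℕ) :
    (lam' C1 C2 φ ℓ (i + k)).comp ((xi C1) ^ k) = lam' C1 C2 φ ℓ i := by
  ext c
  rw [LinearMap.comp_apply, lam'_xi_pow]
  simp

open Classical in
lemma transform_count (j k r : ℕ) (hkr : k + r = j) (ν : C1 →ₗ[F] F) (hν : ν ≠ 0)
    (θfam : Fin n → ℕ → (C1 →ₗ[F] F))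
    (hshift : ∀ (m : Fin n) (i : ℕ), k ≤ i → (θfam m i).comp ((xi C1)^k) = θfam m (i - k))
    (hshift0 : ∀ (m : Fin n) (i : ℕ), i < k → (θfam m i).comp ((xi C1)^k) = 0) :
    (univ.filter fun w : Fin n × Fin (j+1) =>
        ∃ t : F, t • (θfam w.1 w.2.val).comp ((xi C1)^k) = ν).card
      = (univ.filter fun w : Fin n × Fin (j+1) =>
        w.2.val ≤ r ∧ ∃ t : F, t • θfam w.1 w.2.val = ν).card := by
  classical
  have step1 : (univ.filter fun w : Fin n × Fin (j+1) =>
      ∃ t : F, t • (θfam w.1 w.2.val).comp ((xi C1)^k) = ν)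
      = (univ.filter fun w : Fin n × Fin (j+1) =>
        k ≤ w.2.val ∧ ∃ t : F, t • θfam w.1 (w.2.val - k) = ν) := by
    apply Finset.filter_congr
    intro w _
    by_cases hk : k ≤ w.2.val
    · rw [hshift w.1 w.2.val hk]
      simp [hk]
    · rw [hshift0 w.1 w.2.val (by omega)]
      simp only [smul_zero]
      constructor
      · rintro ⟨t, ht⟩; exact absurd ht.symm hν
      · rintro ⟨h, -⟩; exact absurd h hk
  rw [step1]
  apply Finset.card_bij (fun (w : Fin n × Fin (j+1)) _ => (w.1, (⟨w.2.val - k, by omega⟩ : Fin (j+1))))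
  · rintro ⟨m, i⟩ hw
    simp only [Finset.mem_filter, Finset.mem_univ, true_and] at hw ⊢
    obtain ⟨hk, ht⟩ := hw
    have hij : i.val ≤ j := by omega
    exact ⟨by omega, ht⟩
  · rintro ⟨m, i⟩ hw ⟨m', i'⟩ hw' heq
    simp only [Finset.mem_filter, Finset.mem_univ, true_and] at hw hw'
    simp only [Prod.mk.injEq, Fin.mk.injEq] at heq
    obtain ⟨h1, h2⟩ := heq
    have : i.val = i'.val := by omega
    exact Prod.ext h1 (Fin.ext this)
  · rintro ⟨m, i⟩ hw
    simp only [Finset.mem_filter, Finset.mem_univ, true_and] at hw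
    obtain ⟨hir, ht⟩ := hw
    refine ⟨(m, (⟨i.val + k, by omega⟩ : Fin (j+1))), ?_, ?_⟩
    · simp only [Finset.mem_filter, Finset.mem_univ, true_and]
      constructor
      · omega
      · simpa using ht
    · refine Prod.ext rfl (Fin.ext ?_)
      show ((i : ℕ) + k) - k = (i : ℕ)
      omega

open Classical in
lemma window_count (j : ℕ)
    (hcnt : ∀ c : C1,
      (univ.filter fun w : Fin n × Fin (j+1) => lam C1 w.1 w.2.val c ≠ 0).card
        = (univ.filter fun w : Fin n × Fin (j+1) => lam' C1 C2 φ w.1 w.2.val c ≠ 0).card)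
    (ν : C1 →ₗ[F] F) (hν : ν ≠ 0) (r : ℕ) (hr : r ≤ j) :
    (univ.filter fun w : Fin n × Fin (j+1) =>
        w.2.val ≤ r ∧ ∃ t : F, t • lam C1 w.1 w.2.val = ν).card
      = (univ.filter fun w : Fin n × Fin (j+1) =>
        w.2.val ≤ r ∧ ∃ t : F, t • lam' C1 C2 φ w.1 w.2.val = ν).card := by
  classical
  set k := j - r with hk
  have hkr : k + r = j := by omega
  have main := core_countM (W := Fin n × Fin (j+1))
    (fun w => (lam C1 w.1 w.2.val).comp ((xi C1)^k))
    (fun w => (lam' C1 C2 φ w.1 w.2.val).comp ((xi C1)^k))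
    (fun c => hcnt (((xi C1)^k) c)) ν hν
  rw [transform_count C1 j k r hkr ν hν (fun m i => lam C1 m i)
    (fun m i hki => by
      have : i = (i - k) + k := by omega
      rw [this, lam_comp_xi_pow]
      congr 1
      omega)
    (fun m i hik => by
      ext c
      rw [LinearMap.comp_apply, lam_xi_pow, if_neg (by omega)]
      rfl) ] at main
  rw [transform_count C1 j k r hkr ν hν (fun m i => lam' C1 C2 φ m i)
    (fun m i hki => by
      have : i = (i - k) + k := by omega
      rw [this, lam'_comp_xi_pow]
      congr 1
      omega)
    (fun m i hik => by
      ext c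
      rw [LinearMap.comp_apply, lam'_xi_pow, if_neg (by omega)]
      rfl) ] at main
  exact main

open Classical in
lemma top_count (j : ℕ)
    (hcnt : ∀ c : C1,
      (univ.filter fun w : Fin n × Fin (j+1) => lam C1 w.1 w.2.val c ≠ 0).card
        = (univ.filter fun w : Fin n × Fin (j+1) => lam' C1 C2 φ w.1 w.2.val c ≠ 0).card)
    (ν : C1 →ₗ[F] F) (hν : ν ≠ 0) :
    (univ.filter fun m : Fin n => ∃ t : F, t • lam C1 m j = ν).card
      = (univ.filter fun m : Fin n => ∃ t : F, t • lam' C1 C2 φ m j = ν).card := by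
  classical
  -- the full window (r = j) is just everything
  have full_eq : ∀ (θfam : Fin n → ℕ → (C1 →ₗ[F] F)),
      (univ.filter fun w : Fin n × Fin (j+1) =>
        w.2.val ≤ j ∧ ∃ t : F, t • θfam w.1 w.2.val = ν)
      = (univ.filter fun w : Fin n × Fin (j+1) => ∃ t : F, t • θfam w.1 w.2.val = ν) := by
    intro θfam
    apply Finset.filter_congr
    intro w _
    have : w.2.val ≤ j := by omega
    simp [this]
  -- split the full count into the top part and the rest
  have split : ∀ (θfam : Fin n → ℕ → (C1 →ₗ[F] F)),
      (univ.filter fun w : Fin n × Fin (j+1) => ∃ t : F, t • θfam w.1 w.2.val = ν).card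
        = (univ.filter fun w : Fin n × Fin (j+1) =>
            w.2.val < j ∧ ∃ t : F, t • θfam w.1 w.2.val = ν).card
          + (univ.filter fun m : Fin n => ∃ t : F, t • θfam m j = ν).card := by
    intro θfam
    set S := univ.filter fun w : Fin n × Fin (j+1) => ∃ t : F, t • θfam w.1 w.2.val = ν with hS
    have h1 : (S.filter fun w => w.2.val < j).card + (S.filter fun w => ¬ (w.2.val < j)).card
        = S.card := Finset.card_filter_add_card_filter_not _
    have h2 : S.filter (fun w => w.2.val < j)
        = univ.filter fun w : Fin n × Fin (j+1) =>
            w.2.val < j ∧ ∃ t : F, t • θfam w.1 w.2.val = ν := by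
      rw [hS, Finset.filter_filter]
      apply Finset.filter_congr
      intro w _
      tauto
    have h3 : (S.filter fun w => ¬ (w.2.val < j)).card
        = (univ.filter fun m : Fin n => ∃ t : F, t • θfam m j = ν).card := by
      apply Finset.card_bij (fun w _ => w.1)
      · rintro ⟨m, i⟩ hw
        simp only [hS, Finset.mem_filter, Finset.mem_univ, true_and] at hw ⊢
        obtain ⟨ht, hi⟩ := hw
        have : i.val = j := by omega
        rwa [this] at ht
      · rintro ⟨m, i⟩ hw ⟨m', i'⟩ hw' heq
        simp only [hS, Finset.mem_filter, Finset.mem_univ, true_and] at hw hw'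
        have : i.val = j := by omega
        have : i = i' := Fin.ext (by omega)
        exact Prod.ext heq this
      · intro m hm
        simp only [Finset.mem_filter, Finset.mem_univ, true_and] at hm
        refine ⟨(m, (⟨j, by omega⟩ : Fin (j+1))), ?_, rfl⟩
        simp only [hS, Finset.mem_filter, Finset.mem_univ, true_and]
        exact ⟨hm, by omega⟩
    rw [h2] at h1
    omega
  have hsplit := split (fun m i => lam C1 m i)
  have hsplit' := split (fun m i => lam' C1 C2 φ m i)
  have hfull := window_count C1 C2 φ j hcnt ν hν j le_rfl
  rw [full_eq (fun m i => lam C1 m i), full_eq (fun m i => lam' C1 C2 φ m i)] at hfull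
  by_cases hj : j = 0
  · subst hj
    have e0 : ∀ (θfam : Fin n → ℕ → (C1 →ₗ[F] F)),
        (univ.filter fun w : Fin n × Fin 1 =>
          w.2.val < 0 ∧ ∃ t : F, t • θfam w.1 w.2.val = ν).card = 0 := by
      intro θfam
      rw [Finset.card_eq_zero]
      apply Finset.filter_false_of_mem
      rintro w -
      rintro ⟨h, -⟩
      omega
    rw [e0 (fun m i => lam C1 m i)] at hsplit
    rw [e0 (fun m i => lam' C1 C2 φ m i)] at hsplit'
    omega
  · -- for j ≥ 1, the sub-window at r = j-1 matches the strict part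
    have hwin := window_count C1 C2 φ j hcnt ν hν (j-1) (by omega)
    have conv : ∀ (θfam : Fin n → ℕ → (C1 →ₗ[F] F)),
        (univ.filter fun w : Fin n × Fin (j+1) =>
          w.2.val ≤ j - 1 ∧ ∃ t : F, t • θfam w.1 w.2.val = ν)
        = (univ.filter fun w : Fin n × Fin (j+1) =>
          w.2.val < j ∧ ∃ t : F, t • θfam w.1 w.2.val = ν) := by
      intro θfam
      apply Finset.filter_congr
      intro w _
      have : (w.2.val ≤ j - 1) ↔ (w.2.val < j) := by omega
      rw [this]
    rw [conv (fun m i => lam C1 m i), conv (fun m i => lam' C1 C2 φ m i)] at hwin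
    omega

lemma column (jt : ℕ) (m ℓ : Fin n) (t : F)
    (h : t • lam C1 m jt = lam' C1 C2 φ ℓ jt) (i : ℕ) (hi : i ≤ jt) :
    t • lam C1 m i = lam' C1 C2 φ ℓ i := by
  have hc := congrArg (fun f : C1 →ₗ[F] F => f.comp ((xi C1) ^ (jt - i))) h
  simp only [LinearMap.smul_comp] at hc
  have e1 : (lam C1 m jt).comp ((xi C1) ^ (jt - i)) = lam C1 m i := by
    have h' := lam_comp_xi_pow C1 m (jt - i) i
    rw [show i + (jt - i) = jt by omega] at h'
    exact h'
  have e2 : (lam' C1 C2 φ ℓ jt).comp ((xi C1) ^ (jt - i)) = lam' C1 C2 φ ℓ i := by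
    have h' := lam'_comp_xi_pow C1 C2 φ ℓ (jt - i) i
    rw [show i + (jt - i) = jt by omega] at h'
    exact h'
  rwa [e1, e2] at hc

lemma truncp_coeff (j i : ℕ) (p : Polynomial F) :
    (ConvCode.truncp 0 j p).coeff i = if i ≤ j then p.coeff i else 0 := by
  unfold ConvCode.truncp
  rw [Polynomial.finset_sum_coeff]
  simp_rw [Polynomial.coeff_C_mul, Polynomial.coeff_X_pow, mul_ite, mul_one, mul_zero]
  rw [Finset.sum_ite_eq (Finset.Icc 0 j) i (fun i' => p.coeff i')]
  simp

open Classical in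
lemma truncp_support_card (j : ℕ) (p : Polynomial F) :
    (ConvCode.truncp 0 j p).support.card
      = (univ.filter fun i : Fin (j+1) => p.coeff i.val ≠ 0).card := by
  classical
  have hsupp : (ConvCode.truncp 0 j p).support
      = (Finset.Icc 0 j).filter fun i => p.coeff i ≠ 0 := by
    ext i
    rw [Polynomial.mem_support_iff, Finset.mem_filter, Finset.mem_Icc, truncp_coeff]
    by_cases hi : i ≤ j
    · simp [hi]
    · simp [hi]
  rw [hsupp]
  apply Finset.card_bij (fun i hi => (⟨i, by
    simp only [Finset.mem_filter, Finset.mem_Icc] at hi; omega⟩ : Fin (j+1)))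
  · intro i hi
    simp only [Finset.mem_filter, Finset.mem_Icc, Finset.mem_univ, true_and] at hi ⊢
    exact hi.2
  · intro i hi i' hi' heq
    simpa [Fin.mk.injEq] using heq
  · intro i hi
    simp only [Finset.mem_filter, Finset.mem_univ, true_and] at hi
    exact ⟨i.val, by
      simp only [Finset.mem_filter, Finset.mem_Icc]
      exact ⟨⟨Nat.zero_le _, by omega⟩, hi⟩, rfl⟩

open Classical in
lemma wtv_truncv_eq_card (j : ℕ) (c : Fin n → Polynomial F) :
    ConvCode.wtv (ConvCode.truncv 0 j c)
      = (univ.filter fun w : Fin n × Fin (j+1) => (c w.1).coeff w.2.val ≠ 0).card := by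
  classical
  unfold ConvCode.wtv ConvCode.truncv
  rw [Finset.card_filter, Fintype.sum_prod_type]
  apply Finset.sum_congr rfl
  intro ℓ _
  rw [truncp_support_card, Finset.card_filter]

end JEA
/-- partial characterization of `j`-equivalences: there exist a permutation matrix
and an invertible diagonal matrix over `F` such that `φ(c)_{[0,j]} = (c_{[0,j]})PD`, i.e.
`(φ(c)_{[0,j]})_ℓ = a_ℓ · (c_{[0,j]})_{σ(ℓ)}` for all `c ∈ C1` and all coordinates `ℓ`. -/
theorem jEquiv_shape {F : Type*} [Field F] [Fintype F] {n : ℕ}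
    (C1 C2 : Submodule (Polynomial F) (Fin n → Polynomial F))
    (φ : C1 ≃ₗ[Polynomial F] C2) (j : ℕ) (hφ : IsJEquiv C1 C2 φ j) :
    ∃ (σ : Equiv.Perm (Fin n)) (a : Fin n → F), (∀ ℓ, a ℓ ≠ 0) ∧
      ∀ c : C1, ∀ ℓ : Fin n,
        truncp 0 j (((φ c : C2) : Fin n → Polynomial F) ℓ) =
          Polynomial.C (a ℓ) * truncp 0 j ((c : Fin n → Polynomial F) (σ ℓ)) := by

  classical
  have hcnt : ∀ c : C1,
      (Finset.univ.filter fun w : Fin n × Fin (j+1) =>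
          JEA.lam C1 w.1 w.2.val c ≠ 0).card
        = (Finset.univ.filter fun w : Fin n × Fin (j+1) =>
          JEA.lam' C1 C2 φ w.1 w.2.val c ≠ 0).card := by
    intro c
    have h := hφ c
    rw [JEA.wtv_truncv_eq_card, JEA.wtv_truncv_eq_card] at h
    exact h
  have htop := JEA.top_count C1 C2 φ j hcnt
  obtain ⟨σ, hσ⟩ := JEA.exists_perm_ray (fun m => JEA.lam C1 m j)
    (fun ℓ => JEA.lam' C1 C2 φ ℓ j) htop
  choose t ht using hσ
  refine ⟨σ, fun ℓ => ((t ℓ : Fˣ) : F), fun ℓ => Units.ne_zero _, ?_⟩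
  intro c ℓ
  refine Polynomial.ext fun i => ?_
  rw [JEA.truncp_coeff, Polynomial.coeff_C_mul, JEA.truncp_coeff]
  by_cases hi : i ≤ j
  · rw [if_pos hi, if_pos hi]
    have hcol := JEA.column C1 C2 φ j (σ ℓ) ℓ ((t ℓ : Fˣ) : F)
      (by have h' := ht ℓ; rwa [Units.smul_def] at h') i hi
    have happ := LinearMap.congr_fun hcol c
    simp only [LinearMap.smul_apply, smul_eq_mul] at happ
    exact happ.symm
  · rw [if_neg hi, if_neg hi, mul_zero]
end

section
/- Let C be a convolutional code in F[x]^n of rank k. Then the r-generalized column distances are strictly increasing in r: d^r(C) < d^{r+1}(C) for all 1 ≤ r < k. -/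
open Polynomial

namespace ConvCode

variable {F : Type*} [Field F] [Fintype F] {n k : ℕ}

lemma coeff_truncp (j : ℕ) (p : Polynomial F) (i : ℕ) :
    (truncp 0 j p).coeff i = if i ≤ j then p.coeff i else 0 := by
  classical
  unfold truncp
  rw [Polynomial.finset_sum_coeff]
  simp only [Polynomial.coeff_C_mul, Polynomial.coeff_X_pow, mul_ite, mul_one, mul_zero]
  rw [Finset.sum_ite_eq (Finset.Icc 0 j) i (fun b => p.coeff b)]
  simp [Finset.mem_Icc]

lemma mem_gsupp_trunc {r j : ℕ} (d : Fin r → Fin n → Polynomial F) (q : Fin n × ℕ) :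
    q ∈ gsupp (fun s => truncv 0 j (d s)) ↔ q.2 ≤ j ∧ ∃ s, ((d s) q.1).coeff q.2 ≠ 0 := by
  simp only [gsupp, truncv, Set.mem_setOf_eq, coeff_truncp]
  by_cases h : q.2 ≤ j <;> simp [h]

lemma gsupp_finite {r : ℕ} (d : Fin r → Fin n → Polynomial F) : (gsupp d).Finite := by
  classical
  apply Set.Finite.subset (Set.finite_iUnion (fun s : Fin r =>
    Set.finite_iUnion (fun ℓ : Fin n => (Set.finite_singleton ℓ).prod
      ((d s ℓ).support.finite_toSet))))
  rintro ⟨ℓ, i⟩ ⟨s, hs⟩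
  exact Set.mem_iUnion.2 ⟨s, Set.mem_iUnion.2 ⟨ℓ, ⟨rfl, by simpa using hs⟩⟩⟩

lemma gsupp_trunc_mono {r : ℕ} (d : Fin r → Fin n → Polynomial F) {j j' : ℕ} (h : j ≤ j') :
    gsupp (fun s => truncv 0 j (d s)) ⊆ gsupp (fun s => truncv 0 j' (d s)) := by
  intro q hq
  rw [mem_gsupp_trunc] at hq ⊢
  exact ⟨hq.1.trans h, hq.2⟩

lemma gsupp_trunc_subset {r : ℕ} (d : Fin r → Fin n → Polynomial F) (j : ℕ) :
    gsupp (fun s => truncv 0 j (d s)) ⊆ gsupp d := by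
  intro q hq
  rw [mem_gsupp_trunc] at hq
  obtain ⟨s, hs⟩ := hq.2
  exact ⟨s, hs⟩

end ConvCode
namespace ConvCode

set_option linter.unusedSectionVars false
set_option maxHeartbeats 800000
set_option synthInstance.maxHeartbeats 200000

open Matrix

variable {F : Type*} [Field F] [Fintype F] {n k : ℕ}

/-- Rows of `G` remain linearly independent over the rational function field. -/
lemma rows_li_ratfunc (G : Matrix (Fin k) (Fin n) (Polynomial F))
    (hli : LinearIndependent (Polynomial F) (fun i => G i)) :
    LinearIndependent (RatFunc F) (fun i => (G.map (algebraMap (Polynomial F) (RatFunc F))) i) := by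
  classical
  rw [Fintype.linearIndependent_iff]
  intro c hc
  obtain ⟨a, ha⟩ := IsLocalization.exist_integer_multiples_of_finite
    (nonZeroDivisors (Polynomial F)) c
  choose q hq using ha
  have hzero : ∀ ℓ, (∑ i, q i * G i ℓ) = 0 := by
    intro ℓ
    apply RatFunc.algebraMap_injective F
    rw [map_sum, map_zero]
    have := congrFun hc ℓ
    simp only [Finset.sum_apply, Pi.smul_apply, Pi.zero_apply, smul_eq_mul,
      Matrix.map_apply] at this
    calc ∑ i, algebraMap (Polynomial F) (RatFunc F) (q i * G i ℓ)
        = ∑ i, (a : Polynomial F) • (c i * algebraMap (Polynomial F) (RatFunc F) (G i ℓ)) := by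
          refine Finset.sum_congr rfl fun i _ => ?_
          rw [_root_.map_mul, hq i, Algebra.smul_def, Algebra.smul_def, mul_assoc]
      _ = (a : Polynomial F) • (0 : RatFunc F) := by rw [← Finset.smul_sum, this]
      _ = 0 := smul_zero _
  have hq0 : ∀ i, q i = 0 := by
    have h := Fintype.linearIndependent_iff.mp hli q ?_
    · exact h
    · funext ℓ
      simpa [Finset.sum_apply, smul_eq_mul] using hzero ℓ
  intro i
  have := hq i
  rw [hq0 i, map_zero] at this
  have ha0 : (algebraMap (Polynomial F) (RatFunc F)) (a : Polynomial F) ≠ 0 := by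
    refine fun h => nonZeroDivisors.coe_ne_zero a ?_
    exact RatFunc.algebraMap_injective F (by simpa using h)
  have := this.symm
  rw [Algebra.smul_def] at this
  rcases mul_eq_zero.mp this with h | h
  · exact absurd h ha0
  · exact h

/-- There is an injective column selection with nonzero `k × k` minor. -/
lemma exists_cols_det_ne_zero (G : Matrix (Fin k) (Fin n) (Polynomial F))
    (hli : LinearIndependent (Polynomial F) (fun i => G i)) :
    ∃ S : Fin k → Fin n, (G.submatrix id S).det ≠ 0 := by
  classical
  set K := RatFunc F
  set Gk := G.map (algebraMap (Polynomial F) K) with hGk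
  have hliK : LinearIndependent K (fun i => Gk i) := rows_li_ratfunc G hli
  have hrank : Gk.rank = k := by
    have := hliK.rank_matrix; rw [Fintype.card_fin] at this; exact this
  -- columns of Gk span a k-dimensional space
  have hspan : Module.finrank K (Submodule.span K (Set.range Gkᵀ)) = k := by
    have := Matrix.rank_eq_finrank_span_cols Gk; rw [hrank] at this; exact this.symm
  obtain ⟨b, hbsub, hbspan, hbli⟩ := exists_linearIndependent K (Set.range Gkᵀ)
  have hbfin : b.Finite := (Set.finite_range Gkᵀ).subset hbsub
  have hfr : Module.finrank K (Submodule.span K b) = k := by rw [hbspan, hspan]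
  haveI := hbfin.fintype
  have hcard : Fintype.card b = k := by
    have h2 := finrank_span_eq_card hbli
    rw [Subtype.range_coe] at h2
    rw [← h2]
    exact hfr
  let e : Fin k ≃ ↑b := (Fintype.equivFinOfCardEq hcard).symm
  have hSex : ∀ i : Fin k, ∃ ℓ, Gkᵀ ℓ = ↑(e i) := fun i => hbsub (e i).2
  choose S hS using hSex
  refine ⟨S, fun hdet => ?_⟩
  have hunit : IsUnit (Gk.submatrix id S) := by
    rw [← Matrix.linearIndependent_cols_iff_isUnit]
    have hco : (fun i => (Gk.submatrix id S)ᵀ i) = fun i => ((e i : Fin k → K)) := by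
      funext i
      funext l
      have h3 := congrFun (hS i) l
      simpa [Matrix.transpose_apply, Matrix.submatrix_apply] using h3
    rw [show (Gk.submatrix id S).col = fun i => (Gk.submatrix id S)ᵀ i from rfl, hco]
    exact hbli.comp e e.injective
  have hdK : (Gk.submatrix id S).det ≠ 0 :=
    ((Matrix.isUnit_iff_isUnit_det _).mp hunit).ne_zero
  apply hdK
  have hmap : Gk.submatrix id S = (G.submatrix id S).map (algebraMap (Polynomial F) K) :=
    Matrix.ext fun i j => rfl
  rw [hmap]
  have hmd := RingHom.map_det (algebraMap (Polynomial F) K) (G.submatrix id S)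
  rw [RingHom.mapMatrix_apply] at hmd
  rw [← hmd, hdet, map_zero]

end ConvCode
namespace ConvCode

set_option linter.unusedSectionVars false
set_option maxHeartbeats 800000

open Matrix

variable {F : Type*} [Field F] [Fintype F] {n k : ℕ}

/-- Uniform bound: beyond `J0`, every codeword with nonzero constant-term input
has a nonzero coefficient in the truncation window. -/
lemma exists_trunc_coeff_ne_zero (G : Matrix (Fin k) (Fin n) (Polynomial F))
    (hli : LinearIndependent (Polynomial F) (fun i => G i)) :
    ∃ J0 : ℕ, ∀ j, J0 ≤ j → ∀ p : Fin k → Polynomial F,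
      (fun l => (p l).eval 0) ≠ 0 →
      ∃ q : Fin n × ℕ, q.2 ≤ j ∧ ((Matrix.vecMul p G) q.1).coeff q.2 ≠ 0 := by
  classical
  obtain ⟨S, hdet⟩ := exists_cols_det_ne_zero G hli
  set A := G.submatrix id S with hA
  refine ⟨A.det.natDegree, fun j hj p hp0 => ?_⟩
  by_contra hcon
  push_neg at hcon
  have hdvd : ∀ ℓ, (X : Polynomial F) ^ (j + 1) ∣ (Matrix.vecMul p G) ℓ := by
    intro ℓ
    rw [Polynomial.X_pow_dvd_iff]
    intro d hd
    by_contra hne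
    exact hne (hcon (ℓ, d) (by omega))
  -- p ᵥ* A = (p ᵥ* G) ∘ S
  have hpA : Matrix.vecMul p A = fun i => (Matrix.vecMul p G) (S i) := by
    funext i
    simp [hA, Matrix.vecMul, dotProduct, Matrix.submatrix_apply]
  have hkey : ∀ l, A.det * p l = ∑ i, (Matrix.vecMul p G) (S i) * A.adjugate i l := by
    intro l
    have h1 : Matrix.vecMul p (A * A.adjugate) = A.det • p := by
      rw [Matrix.mul_adjugate]
      funext i
      simp [Matrix.vecMul, dotProduct, Matrix.smul_apply, Matrix.one_apply,
        mul_ite, mul_zero, mul_one, Finset.sum_ite_eq, mul_comm]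
    have h2 : Matrix.vecMul (Matrix.vecMul p A) A.adjugate = A.det • p := by
      rw [Matrix.vecMul_vecMul, h1]
    have := congrFun h2 l
    rw [hpA] at this
    simpa [Matrix.vecMul, dotProduct, smul_eq_mul] using this.symm
  obtain ⟨l, hl⟩ := Function.ne_iff.mp hp0
  have hdvd2 : (X : Polynomial F) ^ (j + 1) ∣ A.det * p l := by
    rw [hkey l]
    exact Finset.dvd_sum fun i _ => Dvd.dvd.mul_right (hdvd (S i)) _
  have hcop : IsCoprime ((X : Polynomial F) ^ (j + 1)) (p l) := by
    refine IsCoprime.pow_left ?_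
    rw [Polynomial.irreducible_X.coprime_iff_not_dvd, Polynomial.X_dvd_iff]
    rw [Polynomial.coeff_zero_eq_eval_zero]
    simpa using hl
  have hdvd3 : (X : Polynomial F) ^ (j + 1) ∣ A.det :=
    hcop.dvd_of_dvd_mul_right hdvd2
  have := Polynomial.natDegree_le_of_dvd hdvd3 hdet
  rw [Polynomial.natDegree_X_pow] at this
  omega

end ConvCode
namespace ConvCode

set_option linter.unusedSectionVars false
set_option maxHeartbeats 800000

open Matrix

variable {F : Type*} [Field F] [Fintype F] {n k : ℕ}

lemma li_exchange {r : ℕ} {V : Type*} [AddCommGroup V] [Module F V]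
    {u : Fin (r + 1) → V} (hu : LinearIndependent F u)
    (s0 : Fin (r + 1)) (lam : Fin r → F) :
    LinearIndependent F (fun s => u (s0.succAbove s) - lam s • u s0) := by
  rw [Fintype.linearIndependent_iff] at hu ⊢
  intro g hg
  set h : Fin (r + 1) → F := Fin.insertNth s0 (-(∑ s, g s * lam s)) g with hh
  have hsum : ∑ t, h t • u t = 0 := by
    rw [Fin.sum_univ_succAbove _ s0]
    have h1 : h s0 = -(∑ s, g s * lam s) := by
      rw [hh]; exact Fin.insertNth_apply_same (α := fun _ => F) s0 _ g
    have h2 : ∀ s, h (s0.succAbove s) = g s := fun s => by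
      rw [hh]; exact Fin.insertNth_apply_succAbove (α := fun _ => F) s0 _ g s
    simp only [h1, h2]
    have expand : ∑ s, g s • (u (s0.succAbove s) - lam s • u s0)
        = (∑ s, g s • u (s0.succAbove s)) - (∑ s, g s * lam s) • u s0 := by
      simp only [smul_sub]
      rw [Finset.sum_sub_distrib, Finset.sum_smul]
      congr 1
      refine Finset.sum_congr rfl fun s _ => ?_
      rw [mul_smul]
    rw [neg_smul]
    have := hg
    rw [expand] at this
    have h3 : (∑ s, g s • u (s0.succAbove s)) = (∑ s, g s * lam s) • u s0 := by
      rwa [sub_eq_zero] at this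
    rw [h3]
    abel
  have hz := hu h hsum
  intro s
  have h4 := hz (s0.succAbove s)
  have h2 : h (s0.succAbove s) = g s := by
    rw [hh]; exact Fin.insertNth_apply_succAbove (α := fun _ => F) s0 _ g s
  rwa [h2] at h4

/-- The defining set for `gcdJ` is nonempty when `r ≤ k`. -/
lemma gcdJ_set_nonempty (G : Matrix (Fin k) (Fin n) (Polynomial F)) {r : ℕ} (hrk : r ≤ k)
    (j : ℕ) :
    { m | ∃ p : Fin r → Fin k → Polynomial F,
      LinearIndependent F (fun s => fun l => (p s l).eval 0) ∧
      m = (gsupp fun s => truncv 0 j (Matrix.vecMul (p s) G)).ncard }.Nonempty := by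
  classical
  refine ⟨_, (fun s l => if l = Fin.castLE hrk s then 1 else 0), ?_, rfl⟩
  have : (fun s => fun l => (((fun s l => if l = Fin.castLE hrk s then (1 : Polynomial F)
      else 0) : Fin r → Fin k → Polynomial F) s l).eval 0)
      = fun s => Pi.single (Fin.castLE hrk s) (1 : F) := by
    funext s l
    by_cases h : l = Fin.castLE hrk s <;> simp [h, Pi.single_apply]
  rw [this]
  have hli := (Pi.basisFun F (Fin k)).linearIndependent
  have := hli.comp (Fin.castLE hrk) (Fin.castLE_injective hrk)
  convert this using 1
  funext s
  rw [Function.comp_apply, Pi.basisFun_apply]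

lemma gcdJ_le_ncard (G : Matrix (Fin k) (Fin n) (Polynomial F)) {r j : ℕ}
    (p : Fin r → Fin k → Polynomial F)
    (hp : LinearIndependent F (fun s => fun l => (p s l).eval 0)) :
    gcdJ G r j ≤ (gsupp fun s => truncv 0 j (Matrix.vecMul (p s) G)).ncard :=
  Nat.sInf_le ⟨p, hp, rfl⟩

end ConvCode
namespace ConvCode

set_option linter.unusedSectionVars false
set_option maxHeartbeats 1000000

open Matrix

variable {F : Type*} [Field F] [Fintype F] {n k : ℕ}

lemma gcdJ_succ_le (G : Matrix (Fin k) (Fin n) (Polynomial F)) {r j : ℕ} (hrk : r + 1 ≤ k)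
    (hne : ∀ p : Fin (r + 1) → Fin k → Polynomial F,
      LinearIndependent F (fun s => fun l => (p s l).eval 0) →
      (gsupp fun s => truncv 0 j (Matrix.vecMul (p s) G)).Nonempty) :
    gcdJ G r j + 1 ≤ gcdJ G (r + 1) j := by
  classical
  have hset := gcdJ_set_nonempty G hrk j
  obtain ⟨p, hpli, hd⟩ := Nat.sInf_mem hset
  set D := gsupp fun s => truncv 0 j (Matrix.vecMul (p s) G) with hD
  have hDfin : D.Finite := (gsupp_finite _).subset (gsupp_trunc_subset _ j)
  obtain ⟨q0, hq0⟩ := hne p hpli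
  have hq0D : q0 ∈ D := hq0
  rw [mem_gsupp_trunc] at hq0
  obtain ⟨hq0j, s0, hs0⟩ := hq0
  set a : Fin (r + 1) → F := fun s => ((Matrix.vecMul (p s) G) q0.1).coeff q0.2 with ha
  set lam : Fin r → F := fun s => a (s0.succAbove s) / a s0 with hlam
  set p' : Fin r → Fin k → Polynomial F :=
    fun s => p (s0.succAbove s) - Polynomial.C (lam s) • p s0 with hp'
  have heval : (fun s => fun l => (p' s l).eval 0)
      = fun s => (fun l => (p (s0.succAbove s) l).eval 0)
        - lam s • (fun l => (p s0 l).eval 0) := by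
    funext s l
    simp [hp', smul_eq_mul]
  have hli' : LinearIndependent F (fun s => fun l => (p' s l).eval 0) := by
    rw [heval]
    exact li_exchange hpli s0 lam
  have hcoeff : ∀ s (q : Fin n × ℕ),
      ((Matrix.vecMul (p' s) G) q.1).coeff q.2
        = ((Matrix.vecMul (p (s0.succAbove s)) G) q.1).coeff q.2
          - lam s * ((Matrix.vecMul (p s0) G) q.1).coeff q.2 := by
    intro s q
    have hexp : Matrix.vecMul (p' s) G
        = Matrix.vecMul (p (s0.succAbove s)) G
          - Polynomial.C (lam s) • Matrix.vecMul (p s0) G := by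
      rw [hp', Matrix.sub_vecMul, Matrix.smul_vecMul]
    rw [hexp]
    simp [Polynomial.coeff_sub, Polynomial.coeff_C_mul, smul_eq_mul]
  have hsub : (gsupp fun s => truncv 0 j (Matrix.vecMul (p' s) G)) ⊆ D \ {q0} := by
    intro q hq
    rw [mem_gsupp_trunc] at hq
    obtain ⟨hqj, s, hs⟩ := hq
    constructor
    · rw [hD, mem_gsupp_trunc]
      refine ⟨hqj, ?_⟩
      by_contra hall
      push_neg at hall
      rw [hcoeff, hall, hall] at hs
      simp at hs
    · intro hqq0
      rw [Set.mem_singleton_iff] at hqq0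
      subst hqq0
      rw [hcoeff] at hs
      rw [hlam] at hs
      have : a (s0.succAbove s) / a s0 * a s0 = a (s0.succAbove s) := by
        exact div_mul_cancel₀ _ hs0
      rw [ha] at hs
      simp only [ha] at this
      rw [this] at hs
      simp at hs
  have h1 : gcdJ G r j ≤ (gsupp fun s => truncv 0 j (Matrix.vecMul (p' s) G)).ncard :=
    gcdJ_le_ncard G p' hli'
  have h2 : (gsupp fun s => truncv 0 j (Matrix.vecMul (p' s) G)).ncard ≤ (D \ {q0}).ncard :=
    Set.ncard_le_ncard hsub (hDfin.subset Set.diff_subset)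
  have h3 : (D \ {q0}).ncard = D.ncard - 1 := Set.ncard_diff_singleton_of_mem hq0D
  have h4 : 0 < D.ncard := (Set.ncard_pos hDfin).mpr ⟨q0, hq0D⟩
  have hd' : gcdJ G (r + 1) j = D.ncard := hd
  have h5 : gcdJ G r j ≤ (D \ {q0}).ncard := h1.trans h2
  rw [h3] at h5
  clear_value D a lam p'
  rw [hd']
  have h6 := Nat.add_le_add_right h5 1
  rwa [Nat.sub_add_cancel h4] at h6

end ConvCode
namespace ConvCode

set_option linter.unusedSectionVars false
set_option maxHeartbeats 1000000

open Matrix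

variable {F : Type*} [Field F] [Fintype F] {n k : ℕ}

lemma gcdJ_mono (G : Matrix (Fin k) (Fin n) (Polynomial F)) {r : ℕ} (hrk : r ≤ k) :
    Monotone (fun j => gcdJ G r j) := by
  intro j j' hjj
  obtain ⟨p, hpli, hd⟩ := Nat.sInf_mem (gcdJ_set_nonempty G hrk j')
  have h1 := gcdJ_le_ncard G (j := j) p hpli
  have h2 : (gsupp fun s => truncv 0 j (Matrix.vecMul (p s) G)).ncard
      ≤ (gsupp fun s => truncv 0 j' (Matrix.vecMul (p s) G)).ncard :=
    Set.ncard_le_ncard (gsupp_trunc_mono _ hjj)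
      ((gsupp_finite _).subset (gsupp_trunc_subset _ j'))
  have hd' : gcdJ G r j' = (gsupp fun s => truncv 0 j' (Matrix.vecMul (p s) G)).ncard := hd
  simp only []
  rw [hd']
  exact h1.trans h2

lemma gcdJ_bdd (G : Matrix (Fin k) (Fin n) (Polynomial F)) {r : ℕ} (hrk : r ≤ k) :
    ∃ B, ∀ j, gcdJ G r j ≤ B := by
  obtain ⟨_, p, hpli, _⟩ := gcdJ_set_nonempty G hrk 0
  refine ⟨(gsupp fun s => Matrix.vecMul (p s) G).ncard, fun j => ?_⟩
  refine (gcdJ_le_ncard G p hpli).trans ?_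
  exact Set.ncard_le_ncard (gsupp_trunc_subset _ j) (gsupp_finite _)

lemma eventually_const_of_mono_bdd (f : ℕ → ℕ) (hf : Monotone f) (B : ℕ)
    (hB : ∀ j, f j ≤ B) : ∃ J, ∀ j, J ≤ j → f j = f J := by
  have hbdd : BddAbove (Set.range f) := ⟨B, fun x ⟨j, hj⟩ => hj ▸ hB j⟩
  have hmem : sSup (Set.range f) ∈ Set.range f :=
    Nat.sSup_mem ⟨f 0, Set.mem_range_self 0⟩ hbdd
  obtain ⟨J, hJ⟩ := hmem
  refine ⟨J, fun j hj => le_antisymm ?_ (hf hj)⟩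
  rw [hJ]
  exact le_csSup hbdd (Set.mem_range_self j)

lemma limsup_eventually_const {f : ℕ → ℕ} {J : ℕ} (h : ∀ j, J ≤ j → f j = f J) :
    Filter.limsup f Filter.atTop = f J := by
  have : f =ᶠ[Filter.atTop] fun _ => f J := Filter.eventually_atTop.2 ⟨J, h⟩
  rw [Filter.limsup_congr this, Filter.limsup_const]

end ConvCode
open ConvCode
/-- the `r`-generalized column distances are strictly increasing in `r`. -/
theorem gcdLim_strict_mono {F : Type*} [Field F] [Fintype F] {n k : ℕ}
    (C : Submodule (Polynomial F) (Fin n → Polynomial F))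
    (hk : 1 ≤ k) (hkn : k ≤ n)
    (G : Matrix (Fin k) (Fin n) (Polynomial F)) (hG : IsGenMat C G) :
    ∀ r : ℕ, 1 ≤ r → r < k → gcdLim G r < gcdLim G (r + 1) := by
  intro r hr hrk
  obtain ⟨hliG, -⟩ := hG
  obtain ⟨J0, hJ0⟩ := exists_trunc_coeff_ne_zero G hliG
  have hrk' : r ≤ k := le_of_lt hrk
  have hrk1 : r + 1 ≤ k := hrk
  obtain ⟨Bf, hBf⟩ := gcdJ_bdd G hrk'
  obtain ⟨Bg, hBg⟩ := gcdJ_bdd G hrk1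
  obtain ⟨Jf, hJf⟩ := eventually_const_of_mono_bdd _ (gcdJ_mono G hrk') Bf hBf
  obtain ⟨Jg, hJg⟩ := eventually_const_of_mono_bdd _ (gcdJ_mono G hrk1) Bg hBg
  set j := max Jf (max Jg J0) with hj
  have hjf : Jf ≤ j := le_max_left _ _
  have hjg : Jg ≤ j := (le_max_left _ _).trans (le_max_right _ _)
  have hj0 : J0 ≤ j := (le_max_right _ _).trans (le_max_right _ _)
  have hLf : gcdLim G r = gcdJ G r j := by
    rw [gcdLim, limsup_eventually_const hJf, hJf j hjf]
  have hLg : gcdLim G (r + 1) = gcdJ G (r + 1) j := by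
    rw [gcdLim, limsup_eventually_const hJg, hJg j hjg]
  rw [hLf, hLg]
  have hkey : gcdJ G r j + 1 ≤ gcdJ G (r + 1) j := by
    refine gcdJ_succ_le G hrk1 ?_
    intro p hpli
    have hp0 : (fun l => (p 0 l).eval 0) ≠ 0 := hpli.ne_zero 0
    obtain ⟨q, hq1, hq2⟩ := hJ0 j hj0 (p 0) hp0
    exact ⟨q, (mem_gsupp_trunc _ q).2 ⟨hq1, 0, hq2⟩⟩
  omega
end

section
/- Let C1 and C2 be convolutional codes in F[x]^n of rank k and let φ : C1 → C2 be a j'-equivalence for some j' ∈ ℕ. Then d_j^r(C1) = d_j^r(C2) for every 1 ≤ r ≤ k and every 0 ≤ j ≤ j'. -/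
open Polynomial

open ConvCode

open Polynomial ConvCode
open scoped Classical
set_option linter.unusedSectionVars false

namespace ConvAux

variable {F : Type*} [Field F] [Fintype F] {n k : ℕ}

lemma coeff_truncp (j i : ℕ) (p : Polynomial F) :
    (truncp 0 j p).coeff i = if i ≤ j then p.coeff i else 0 := by
  unfold truncp
  rw [Polynomial.finset_sum_coeff]
  simp only [Polynomial.coeff_C_mul, Polynomial.coeff_X_pow, mul_ite, mul_one, mul_zero]
  rw [Finset.sum_ite_eq (Finset.Icc 0 j) i (fun m => p.coeff m)]
  simp [Nat.le_iff_lt_or_eq]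

lemma supp_truncp (j : ℕ) (p : Polynomial F) :
    (truncp 0 j p).support = (Finset.range (j+1)).filter (fun i => p.coeff i ≠ 0) := by
  classical
  ext i
  simp only [Polynomial.mem_support_iff, coeff_truncp, Finset.mem_filter, Finset.mem_range,
    Nat.lt_succ_iff]
  split_ifs with h <;> simp [h]

lemma wtv_truncv (j : ℕ) (c : Fin n → Polynomial F) :
    wtv (truncv 0 j c) =
      ∑ ℓ, ((Finset.range (j+1)).filter (fun i => (c ℓ).coeff i ≠ 0)).card := by
  classical
  unfold wtv truncv
  simp [supp_truncp]


lemma card_shift (m j : ℕ) (p : Polynomial F) :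
    ((Finset.range (m + j + 1)).filter (fun i => (p * X ^ m).coeff i ≠ 0)).card
      = ((Finset.range (j + 1)).filter (fun i => p.coeff i ≠ 0)).card := by
  apply Finset.card_bij' (fun i _ => i - m) (fun i _ => i + m)
  · intro a ha
    simp only [Finset.mem_filter, Finset.mem_range, Polynomial.coeff_mul_X_pow'] at ha
    obtain ⟨h1, h2⟩ := ha
    have hm : m ≤ a := by by_contra h; simp [h] at h2
    simp only [Finset.mem_filter, Finset.mem_range]
    constructor
    · omega
    · simpa [hm] using h2
  · intro a ha
    simp only [Finset.mem_filter, Finset.mem_range] at ha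
    simp only [Finset.mem_filter, Finset.mem_range, Polynomial.coeff_mul_X_pow']
    constructor
    · omega
    · simpa using ha.2
  · intro a ha
    simp only [Finset.mem_filter, Finset.mem_range, Polynomial.coeff_mul_X_pow'] at ha
    have hm : m ≤ a := by by_contra h; simp [h] at ha
    omega
  · intro a _; omega

lemma wtv_trunc_shift (m j : ℕ) (c : Fin n → Polynomial F) :
    wtv (truncv 0 (m + j) ((X : Polynomial F) ^ m • c)) = wtv (truncv 0 j c) := by
  rw [wtv_truncv, wtv_truncv]
  refine Finset.sum_congr rfl fun ℓ _ => ?_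
  have h : ((X : Polynomial F) ^ m • c) ℓ = c ℓ * X ^ m := by
    simp [smul_eq_mul, mul_comm]
  simp only [h]
  exact card_shift m j (c ℓ)

lemma wtv_trunc_shift' {j j' : ℕ} (hj : j ≤ j') (c : Fin n → Polynomial F) :
    wtv (truncv 0 j' ((X : Polynomial F) ^ (j' - j) • c)) = wtv (truncv 0 j c) := by
  have := wtv_trunc_shift (j' - j) j c
  rwa [show j' - j + j = j' by omega] at this

lemma isJEquiv_of_le {C1 C2 : Submodule (Polynomial F) (Fin n → Polynomial F)}
    {φ : C1 ≃ₗ[Polynomial F] C2} {j' : ℕ} (hφ : IsJEquiv C1 C2 φ j') {j : ℕ} (hj : j ≤ j') :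
    IsJEquiv C1 C2 φ j := by
  intro c
  have h1 := hφ (((X : Polynomial F) ^ (j' - j)) • c)
  have hc1 : (((((X : Polynomial F) ^ (j' - j)) • c) : C1) : Fin n → Polynomial F)
      = (X : Polynomial F) ^ (j' - j) • (c : Fin n → Polynomial F) := rfl
  have hc2 : ((φ ((((X : Polynomial F) ^ (j' - j)) • c)) : C2) : Fin n → Polynomial F)
      = (X : Polynomial F) ^ (j' - j) • ((φ c : C2) : Fin n → Polynomial F) := by
    rw [map_smul]; rfl
  rw [hc1, hc2] at h1
  rwa [wtv_trunc_shift' hj, wtv_trunc_shift' hj] at h1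

lemma isJEquiv_symm {C1 C2 : Submodule (Polynomial F) (Fin n → Polynomial F)}
    {φ : C1 ≃ₗ[Polynomial F] C2} {j' : ℕ} (hφ : IsJEquiv C1 C2 φ j') :
    IsJEquiv C2 C1 φ.symm j' := by
  intro c
  have := hφ (φ.symm c)
  rw [LinearEquiv.apply_symm_apply] at this
  omega

lemma card_combo_ne_zero {r : ℕ} (v : Fin r → F) (hv : v ≠ 0) :
    (Finset.univ.filter (fun a : Fin r → F => ∑ s, a s * v s ≠ 0)).card
      = Fintype.card F ^ r - Fintype.card F ^ (r - 1) := by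
  obtain ⟨s0, hs0⟩ := Function.ne_iff.mp hv
  rw [Pi.zero_apply] at hs0
  set f : (Fin r → F) →ₗ[F] F :=
    { toFun := fun a => ∑ s, a s * v s
      map_add' := fun a b => by simp [add_mul, Finset.sum_add_distrib]
      map_smul' := fun t a => by simp [Finset.mul_sum, mul_assoc] } with hf
  have hsurj : Function.Surjective f := by
    intro y
    refine ⟨Pi.single s0 (y * (v s0)⁻¹), ?_⟩
    simp only [hf, LinearMap.coe_mk, AddHom.coe_mk]
    rw [Finset.sum_eq_single s0]
    · simp only [Pi.single_eq_same]; field_simp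
    · intro b _ hb; simp [Pi.single_apply, hb]
    · simp
  have hrank : Module.finrank F (LinearMap.range f) = 1 := by
    rw [LinearMap.range_eq_top.mpr hsurj, finrank_top, Module.finrank_self]
  have htot := LinearMap.finrank_range_add_finrank_ker f
  rw [hrank, Module.finrank_fin_fun] at htot
  have hker : Module.finrank F (LinearMap.ker f) = r - 1 := by omega
  have hcardker : (Finset.univ.filter (fun a : Fin r → F => ∑ s, a s * v s = 0)).card
      = Fintype.card F ^ (r - 1) := by
    have h1 : Fintype.card (LinearMap.ker f) = Fintype.card F ^ (r - 1) := by
      rw [Module.card_eq_pow_finrank (K := F), hker]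
    have h2 : Fintype.card (LinearMap.ker f)
        = Fintype.card {a : Fin r → F // ∑ s, a s * v s = 0} :=
      Fintype.card_congr (Equiv.subtypeEquivRight (fun a => by
        simp [LinearMap.mem_ker, hf]))
    rw [← h1, h2, Fintype.card_subtype]
  have hsplit := Finset.card_filter_add_card_filter_not
    (s := (Finset.univ : Finset (Fin r → F))) (fun a => ∑ s, a s * v s ≠ 0)
  simp only [ne_eq, not_not] at hsplit
  rw [Finset.card_univ, Fintype.card_fun, Fintype.card_fin, hcardker] at hsplit
  exact Nat.eq_sub_of_add_eq hsplit

lemma vecMul_eq_sum (P : Fin k → Polynomial F) (G : Matrix (Fin k) (Fin n) (Polynomial F)) :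
    Matrix.vecMul P G = ∑ l, P l • G l := by
  funext ℓ
  simp [Matrix.vecMul, dotProduct, Finset.sum_apply, smul_eq_mul]

lemma coeff_combo {r : ℕ} (a : Fin r → F) (c : Fin r → Fin n → Polynomial F) (ℓ : Fin n) (i : ℕ) :
    ((∑ s, Polynomial.C (a s) • c s) ℓ).coeff i = ∑ s, a s * ((c s ℓ).coeff i) := by
  simp [Finset.sum_apply, Polynomial.finset_sum_coeff, Polynomial.coeff_C_mul, smul_eq_mul]

lemma sum_wtv_trunc {r : ℕ} (j : ℕ) (c : Fin r → Fin n → Polynomial F) :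
    ∑ a : Fin r → F, wtv (truncv 0 j (∑ s, Polynomial.C (a s) • c s))
    = (Fintype.card F ^ r - Fintype.card F ^ (r-1))
        * (gsupp fun s => truncv 0 j (c s)).ncard := by
  set S := (Finset.univ ×ˢ Finset.range (j+1)).filter
    (fun q : Fin n × ℕ => ∃ s, ((c s) q.1).coeff q.2 ≠ 0) with hS
  have hset : gsupp (fun s => truncv 0 j (c s)) = ↑S := by
    ext ⟨ℓ, i⟩
    simp only [gsupp, Set.mem_setOf_eq, hS, Finset.coe_filter, Finset.mem_product,
      Finset.mem_univ, Finset.mem_range, truncv, coeff_truncp, Nat.lt_succ_iff, true_and]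
    constructor
    · rintro ⟨s, hs⟩
      by_cases h : i ≤ j
      · exact ⟨h, s, by simpa [h] using hs⟩
      · simp [h] at hs
    · rintro ⟨h, s, hs⟩
      exact ⟨s, by simpa [h] using hs⟩
  rw [hset, Set.ncard_coe_finset]
  calc ∑ a : Fin r → F, wtv (truncv 0 j (∑ s, Polynomial.C (a s) • c s))
      = ∑ a : Fin r → F, ∑ q ∈ Finset.univ ×ˢ Finset.range (j+1),
          (if (∑ s, a s * ((c s q.1).coeff q.2)) ≠ 0 then 1 else 0) := by
        refine Finset.sum_congr rfl fun a _ => ?_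
        rw [wtv_truncv, Finset.sum_product]
        refine Finset.sum_congr rfl fun ℓ _ => ?_
        rw [Finset.card_filter]
        exact Finset.sum_congr rfl fun i _ => by rw [coeff_combo]
    _ = ∑ q ∈ Finset.univ ×ˢ Finset.range (j+1), ∑ a : Fin r → F,
          (if (∑ s, a s * ((c s q.1).coeff q.2)) ≠ 0 then 1 else 0) := Finset.sum_comm
    _ = ∑ q ∈ Finset.univ ×ˢ Finset.range (j+1),
          (if (∃ s, ((c s) q.1).coeff q.2 ≠ 0)
            then (Fintype.card F ^ r - Fintype.card F ^ (r-1)) else 0) := by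
        refine Finset.sum_congr rfl fun q _ => ?_
        by_cases h : ∃ s, ((c s) q.1).coeff q.2 ≠ 0
        · rw [if_pos h]
          have hv : (fun s => ((c s) q.1).coeff q.2) ≠ 0 := by
            obtain ⟨s, hs⟩ := h
            intro h0
            exact hs (congrFun h0 s)
          rw [← card_combo_ne_zero _ hv, Finset.card_filter]
        · rw [if_neg h]
          push_neg at h
          refine Finset.sum_eq_zero fun a _ => ?_
          simp [h]
    _ = ∑ _q ∈ S, (Fintype.card F ^ r - Fintype.card F ^ (r-1)) :=
        (Finset.sum_filter _ _).symm
    _ = _ := by rw [Finset.sum_const, smul_eq_mul, mul_comm]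

lemma vecMul_mem {C : Submodule (Polynomial F) (Fin n → Polynomial F)}
    {G : Matrix (Fin k) (Fin n) (Polynomial F)} (hG : IsGenMat C G) (P : Fin k → Polynomial F) :
    Matrix.vecMul P G ∈ C := by
  rw [vecMul_eq_sum, ← hG.2]
  exact Submodule.sum_mem _ fun l _ =>
    Submodule.smul_mem _ _ (Submodule.subset_span ⟨l, rfl⟩)

lemma eval0_zero_iff {C : Submodule (Polynomial F) (Fin n → Polynomial F)}
    {G : Matrix (Fin k) (Fin n) (Polynomial F)} (hG : IsGenMat C G) (P : Fin k → Polynomial F) :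
    (∀ l, (P l).eval 0 = 0) ↔ ∃ d ∈ C, Matrix.vecMul P G = (X : Polynomial F) • d := by
  constructor
  · intro h
    have hdvd : ∀ l, ∃ q, P l = X * q := fun l =>
      Polynomial.X_dvd_iff.mpr (by rw [Polynomial.coeff_zero_eq_eval_zero]; exact h l)
    choose Q hQ using hdvd
    refine ⟨Matrix.vecMul Q G, vecMul_mem hG Q, ?_⟩
    funext ℓ
    simp only [vecMul_eq_sum, Finset.sum_apply, Pi.smul_apply, smul_eq_mul, Finset.mul_sum]
    exact Finset.sum_congr rfl fun l _ => by rw [hQ l]; ring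
  · rintro ⟨d, hd, hPG⟩
    rw [← hG.2] at hd
    obtain ⟨Q, hQ⟩ := (Submodule.mem_span_range_iff_exists_fun (Polynomial F)).mp hd
    have h1 : ∑ l, P l • G l = (X : Polynomial F) • d := by rw [← vecMul_eq_sum, hPG]
    have h0 : ∑ l, (P l - X * Q l) • G l = 0 := by
      simp only [sub_smul, mul_smul, Finset.sum_sub_distrib, h1, ← Finset.smul_sum, hQ,
        sub_self]
    have hall := Fintype.linearIndependent_iff.mp hG.1 (fun l => P l - X * Q l) h0
    intro l
    have := hall l
    have hPl : P l = X * Q l := by linear_combination this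
    rw [hPl]
    simp

lemma li_eval0_iff {C : Submodule (Polynomial F) (Fin n → Polynomial F)}
    {G : Matrix (Fin k) (Fin n) (Polynomial F)} (hG : IsGenMat C G) {r : ℕ}
    (p : Fin r → Fin k → Polynomial F) :
    LinearIndependent F (fun s => fun l => (p s l).eval 0) ↔
    ∀ a : Fin r → F,
      (∃ d ∈ C, (∑ s, Polynomial.C (a s) • Matrix.vecMul (p s) G) = (X : Polynomial F) • d)
      → a = 0 := by
  rw [Fintype.linearIndependent_iff]
  have key : ∀ a : Fin r → F,
      ((∑ s, a s • (fun l => (p s l).eval 0)) = 0 ↔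
      (∃ d ∈ C, (∑ s, Polynomial.C (a s) • Matrix.vecMul (p s) G) = (X : Polynomial F) • d)) := by
    intro a
    set P : Fin k → Polynomial F := fun l => ∑ s, Polynomial.C (a s) * p s l with hP
    have h1 : ((∑ s, a s • (fun l => (p s l).eval 0)) = 0) ↔ (∀ l, (P l).eval 0 = 0) := by
      rw [funext_iff]
      apply forall_congr'
      intro l
      simp [hP, Polynomial.eval_finset_sum, Finset.sum_apply]
    have h2 : (∑ s, Polynomial.C (a s) • Matrix.vecMul (p s) G) = Matrix.vecMul P G := by
      funext ℓ
      simp only [hP, Finset.sum_apply, Pi.smul_apply, smul_eq_mul, Matrix.vecMul,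
        dotProduct, Finset.mul_sum, Finset.sum_mul]
      rw [Finset.sum_comm]
      exact Finset.sum_congr rfl fun l _ => Finset.sum_congr rfl fun s _ => by ring
    rw [h1, h2, eval0_zero_iff hG P]
  constructor
  · intro h a ha
    funext s
    exact h a ((key a).mpr ha) s
  · intro h g hg s
    have := h g ((key g).mp hg)
    exact congrFun this s

noncomputable def basisOf {C : Submodule (Polynomial F) (Fin n → Polynomial F)}
    {G : Matrix (Fin k) (Fin n) (Polynomial F)} (hG : IsGenMat C G) :
    Module.Basis (Fin k) (Polynomial F) C :=
  (Module.Basis.span hG.1).map (LinearEquiv.ofEq _ _ hG.2)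

lemma basisOf_coe {C : Submodule (Polynomial F) (Fin n → Polynomial F)}
    {G : Matrix (Fin k) (Fin n) (Polynomial F)} (hG : IsGenMat C G) (l : Fin k) :
    ((basisOf hG l : C) : Fin n → Polynomial F) = G l := by
  simp [basisOf, Module.Basis.map_apply, LinearEquiv.coe_ofEq_apply, Module.Basis.span_apply]

lemma vecMul_repr {C : Submodule (Polynomial F) (Fin n → Polynomial F)}
    {G : Matrix (Fin k) (Fin n) (Polynomial F)} (hG : IsGenMat C G) (x : C) :
    Matrix.vecMul (fun l => (basisOf hG).repr x l) G = (x : Fin n → Polynomial F) := by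
  conv_rhs => rw [← Module.Basis.sum_repr (basisOf hG) x]
  rw [vecMul_eq_sum]
  have : (((∑ l, (basisOf hG).repr x l • basisOf hG l : C)) : Fin n → Polynomial F)
      = ∑ l, (basisOf hG).repr x l • ((basisOf hG l : C) : Fin n → Polynomial F) := by
    push_cast
    rfl
  rw [this]
  exact Finset.sum_congr rfl fun l _ => by rw [basisOf_coe]

lemma gcd_set_subset {r : ℕ}
    (C1 C2 : Submodule (Polynomial F) (Fin n → Polynomial F))
    (G1 : Matrix (Fin k) (Fin n) (Polynomial F)) (hG1 : IsGenMat C1 G1)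
    (G2 : Matrix (Fin k) (Fin n) (Polynomial F)) (hG2 : IsGenMat C2 G2)
    (φ : C1 ≃ₗ[Polynomial F] C2) (j' : ℕ) (hφ : IsJEquiv C1 C2 φ j')
    (hr : 1 ≤ r) (j : ℕ) (hj : j ≤ j') :
    { m | ∃ p : Fin r → Fin k → Polynomial F,
      LinearIndependent F (fun s => fun l => (p s l).eval 0) ∧
      m = (gsupp fun s => truncv 0 j (Matrix.vecMul (p s) G1)).ncard } ⊆
    { m | ∃ p : Fin r → Fin k → Polynomial F,
      LinearIndependent F (fun s => fun l => (p s l).eval 0) ∧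
      m = (gsupp fun s => truncv 0 j (Matrix.vecMul (p s) G2)).ncard } := by
  rintro m ⟨p, hLI, rfl⟩
  set c : Fin r → C1 := fun s => ⟨Matrix.vecMul (p s) G1, vecMul_mem hG1 (p s)⟩ with hc
  set p' : Fin r → Fin k → Polynomial F := fun s l => (basisOf hG2).repr (φ (c s)) l with hp'
  have key1 : ∀ s, Matrix.vecMul (p' s) G2 = ((φ (c s) : C2) : Fin n → Polynomial F) :=
    fun s => vecMul_repr hG2 (φ (c s))
  have keyc : ∀ a : Fin r → F,
      (∑ s, Polynomial.C (a s) • Matrix.vecMul (p s) G1)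
        = (((∑ s, Polynomial.C (a s) • c s : C1)) : Fin n → Polynomial F) := by
    intro a
    push_cast
    rfl
  have keyc2 : ∀ a : Fin r → F,
      (∑ s, Polynomial.C (a s) • Matrix.vecMul (p' s) G2)
        = ((φ (∑ s, Polynomial.C (a s) • c s) : C2) : Fin n → Polynomial F) := by
    intro a
    rw [map_sum]
    push_cast
    exact Finset.sum_congr rfl fun s _ => by rw [map_smul, Submodule.coe_smul, key1]
  have hLI' : LinearIndependent F (fun s => fun l => (p' s l).eval 0) := by
    rw [li_eval0_iff hG2]
    rintro a ⟨d, hd, hEq⟩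
    rw [keyc2 a] at hEq
    set e : C1 := ∑ s, Polynomial.C (a s) • c s with he
    have h1 : φ e = (X : Polynomial F) • (⟨d, hd⟩ : C2) := Subtype.ext (by simpa using hEq)
    have h2 : e = (X : Polynomial F) • (φ.symm ⟨d, hd⟩) := by
      apply φ.injective
      rw [h1, map_smul, LinearEquiv.apply_symm_apply]
    refine (li_eval0_iff hG1 p).mp hLI a
      ⟨((φ.symm ⟨d, hd⟩ : C1) : Fin n → Polynomial F), (φ.symm ⟨d, hd⟩).2, ?_⟩
    rw [keyc a, ← he, h2]
    rfl
  refine ⟨p', hLI', ?_⟩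
  have hq : 1 < Fintype.card F := Fintype.one_lt_card
  have hNpos : 0 < Fintype.card F ^ r - Fintype.card F ^ (r-1) := by
    have : Fintype.card F ^ (r-1) < Fintype.card F ^ r :=
      Nat.pow_lt_pow_right hq (by omega)
    omega
  have h1 := sum_wtv_trunc (n := n) j (fun s => Matrix.vecMul (p s) G1)
  have h2 := sum_wtv_trunc (n := n) j (fun s => Matrix.vecMul (p' s) G2)
  have hsum :
      ∑ a : Fin r → F, wtv (truncv 0 j (∑ s, Polynomial.C (a s) • Matrix.vecMul (p s) G1))
      = ∑ a : Fin r → F,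
          wtv (truncv 0 j (∑ s, Polynomial.C (a s) • Matrix.vecMul (p' s) G2)) := by
    refine Finset.sum_congr rfl fun a _ => ?_
    rw [keyc a, keyc2 a]
    exact isJEquiv_of_le hφ hj (∑ s, Polynomial.C (a s) • c s)
  rw [h1, h2] at hsum
  exact Nat.eq_of_mul_eq_mul_left hNpos hsum

end ConvAux

set_option maxHeartbeats 1000000 in
open ConvAux in
/-- `(r,j)`-generalized column distances are invariant under `j'`-equivalence
for all `j ≤ j'`. -/
theorem gcdJ_jEquiv_invariant {F : Type*} [Field F] [Fintype F] {n k : ℕ}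
    (C1 C2 : Submodule (Polynomial F) (Fin n → Polynomial F))
    (hk : 1 ≤ k) (hkn : k ≤ n)
    (G1 : Matrix (Fin k) (Fin n) (Polynomial F)) (hG1 : IsGenMat C1 G1)
    (G2 : Matrix (Fin k) (Fin n) (Polynomial F)) (hG2 : IsGenMat C2 G2)
    (φ : C1 ≃ₗ[Polynomial F] C2) (j' : ℕ) (hφ : IsJEquiv C1 C2 φ j') :
    ∀ r : ℕ, 1 ≤ r → r ≤ k → ∀ j : ℕ, j ≤ j' → gcdJ G1 r j = gcdJ G2 r j := by
  intro r hr hkr j hj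
  unfold gcdJ
  congr 1
  apply Set.Subset.antisymm
  · exact gcd_set_subset C1 C2 G1 hG1 G2 hG2 φ j' hφ hr j hj
  · exact gcd_set_subset C2 C1 G2 hG2 G1 hG1 φ.symm j' (isJEquiv_symm hφ) hr j hj
end
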